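/- arXiv:1301.0849 — 9 statements merged into one kernel-verified Lean document; each statement's English description precedes it below -/
import Mathlib

section
/- Let p and q be nodes of the syntax tree of a regular expression e with q ≠ p, and let w, w' be strings over Σ. Then there exists a path t : p ⇒[w] q if and only if there exists a run of the PWπ machine ⟨p; w·w'⟩ →* ⟨q; w'⟩. -/
/-!
Formalization of backtracking regular-expression matching (PWπ / PWFπ / HFπ machines).

Nodes of the syntax tree of a fixed regular expression `e` are represented as
positions (lists of booleans: `false` = left/only child, `true` = right child).
`e.sub p` is the subexpression at position `p` (`none` if the position is invalid),
and `e.kont p` is the continuation pointer `k(p)` (`none` represents `⊥`).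
-/

inductive RE (σ : Type) : Type where
  | sym : σ → RE σ
  | eps : RE σ
  | cat : RE σ → RE σ → RE σ
  | alt : RE σ → RE σ → RE σ
  | star : RE σ → RE σ

/-- A position (node) in the syntax tree. The root is `[]`. -/
abbrev RPos : Type := List Bool

/-- A node pointer: either a position or `⊥` (represented by `none`). -/
abbrev RNode : Type := Option RPos

/-- A configuration of the PWπ machine: a pointer and the remaining input. -/
abbrev RConf (σ : Type) : Type := RNode × List σ

namespace RE

variable {σ : Type}

/-- The subexpression `π(p)` of `e` at position `p` (`none` if `p` is invalid). -/
def sub : RE σ → RPos → Option (RE σ)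
  | f, [] => some f
  | cat f1 f2, b :: p => sub (if b then f2 else f1) p
  | alt f1 f2, b :: p => sub (if b then f2 else f1) p
  | star f1, false :: p => sub f1 p
  | _, _ => none

/-- `kontAux f cur rest kc` computes the continuation of the node at position
`cur ++ rest`, where `f` is the subexpression at `cur` and `kc` is the
continuation of the node at `cur`. -/
def kontAux : RE σ → RPos → RPos → RNode → RNode
  | _, _, [], kc => kc
  | cat f1 _, cur, false :: rest, _ => kontAux f1 (cur ++ [false]) rest (some (cur ++ [true]))
  | cat _ f2, cur, true :: rest, kc => kontAux f2 (cur ++ [true]) rest kc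
  | alt f1 _, cur, false :: rest, kc => kontAux f1 (cur ++ [false]) rest kc
  | alt _ f2, cur, true :: rest, kc => kontAux f2 (cur ++ [true]) rest kc
  | star f1, cur, false :: rest, _ => kontAux f1 (cur ++ [false]) rest (some cur)
  | _, _, _, _ => none

/-- The continuation pointer `k(p)`; `k(p_root) = ⊥ = none`. -/
def kont (e : RE σ) (p : RPos) : RNode := kontAux e [] p none

/-- `π` extended to node pointers. -/
def subN (e : RE σ) : RNode → Option (RE σ)
  | none => none
  | some p => e.sub p

/-- `k` extended to node pointers. -/
def kontN (e : RE σ) : RNode → RNode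
  | none => none
  | some p => e.kont p

/-- The language of a regular expression. -/
def lang : RE σ → Language σ
  | sym a => {[a]}
  | eps => 1
  | cat f1 f2 => lang f1 * lang f2
  | alt f1 f2 => lang f1 + lang f2
  | star f => KStar.kstar (lang f)

/-- The transition relation of the PWπ machine. -/
inductive PWStep (e : RE σ) : RConf σ → RConf σ → Prop
  | altL {p : RPos} {f1 f2 : RE σ} {w : List σ} :
      e.sub p = some (alt f1 f2) → PWStep e (some p, w) (some (p ++ [false]), w)
  | altR {p : RPos} {f1 f2 : RE σ} {w : List σ} :
      e.sub p = some (alt f1 f2) → PWStep e (some p, w) (some (p ++ [true]), w)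
  | starK {p : RPos} {f1 : RE σ} {w : List σ} :
      e.sub p = some (star f1) → PWStep e (some p, w) (e.kont p, w)
  | starI {p : RPos} {f1 : RE σ} {w : List σ} :
      e.sub p = some (star f1) → PWStep e (some p, w) (some (p ++ [false]), w)
  | catL {p : RPos} {f1 f2 : RE σ} {w : List σ} :
      e.sub p = some (cat f1 f2) → PWStep e (some p, w) (some (p ++ [false]), w)
  | symC {p : RPos} {a : σ} {w : List σ} :
      e.sub p = some (sym a) → PWStep e (some p, a :: w) (e.kont p, w)
  | epsC {p : RPos} {w : List σ} :
      e.sub p = some eps → PWStep e (some p, w) (e.kont p, w)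

/-- `IsPath e t p w q` : `t : p ⇒[w] q` is a path of pointers labelled by the string `w`. -/
inductive IsPath (e : RE σ) : List RNode → RNode → List σ → RNode → Prop
  | single (p : RNode) : IsPath e [p] p [] p
  | snoc {t : List RNode} {p q q' : RNode} {w w' w1 : List σ} :
      IsPath e t p w q → PWStep e (q, w' ++ w1) (q', w1) →
      IsPath e (t ++ [q']) p (w ++ w') q'

/-- The transition relation of the PWFπ (backtracking) machine on stacks of
PWπ configurations. -/
inductive PWFStep (e : RE σ) : List (RConf σ) → List (RConf σ) → Prop
  | one {c c' : RConf σ} {f : List (RConf σ)} :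
      PWStep e c c' → (∀ d, PWStep e c d → d = c') → PWFStep e (c :: f) (c' :: f)
  | two {c c1 c2 : RConf σ} {f : List (RConf σ)} :
      PWStep e c c1 → PWStep e c c2 → c1 ≠ c2 →
      (∀ d, PWStep e c d → d = c1 ∨ d = c2) → PWFStep e (c :: f) (c1 :: c2 :: f)
  | fail {c : RConf σ} {f : List (RConf σ)} :
      (∀ d, ¬ PWStep e c d) → PWFStep e (c :: f) f

end RE

/-- `NSteps R n a b` : there is a sequence of exactly `n` `R`-transitions from `a` to `b`. -/
def NSteps {α : Type*} (R : α → α → Prop) : ℕ → α → α → Prop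
  | 0, a, b => a = b
  | n + 1, a, b => ∃ c, R a c ∧ NSteps R n c b

namespace RE

variable {σ : Type}

/-- A non-consuming PWπ transition, viewed as a relation on pointers. -/
def EpsStep (e : RE σ) (p q : RNode) : Prop := PWStep e (p, ([] : List σ)) (q, [])

/-- `L` is (a list representing) `evolve(p)`: the nodes reachable from `p` by
non-consuming transitions whose subexpression is an input symbol. -/
def IsEvolve (e : RE σ) (p : RNode) (L : List RNode) : Prop :=
  ∀ q, q ∈ L ↔ (Relation.ReflTransGen (EpsStep e) p q ∧ ∃ a, e.subN q = some (sym a))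

/-- `DRel e a P r` : `r` is a result of the derivative computation `D_a(P)`. -/
inductive DRel (e : RE σ) (a : σ) : List RNode → List RNode → Prop
  | nil : DRel e a [] []
  | symNe {h : RNode} {t r : List RNode} {b : σ} :
      e.subN h = some (sym b) → b ≠ a → DRel e a t r → DRel e a (h :: t) r
  | symEq {h : RNode} {t r : List RNode} :
      e.subN h = some (sym a) → DRel e a t r → DRel e a (h :: t) (e.kontN h :: r)
  | ev {h : RNode} {t r L : List RNode} :
      (∀ b, e.subN h ≠ some (sym b)) → IsEvolve e h L →
      DRel e a (L ++ t) r → DRel e a (h :: t) r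

/-- The transition relation on wP frames: `(w, P) → (w·a, D_a(P))` when `D_a(P) ≠ []`. -/
inductive WPStep (e : RE σ) : List σ × List RNode → List σ × List RNode → Prop
  | mk {w : List σ} {P : List RNode} {a : σ} {r : List RNode} :
      DRel e a P r → r ≠ [] → WPStep e (w, P) (w ++ [a], r)

end RE

/-- A configuration of the HFπ machine: a history (set of node-sets) and a
queue of wP frames. -/
abbrev HFConf (σ : Type) : Type := Finset (Finset RNode) × List (List σ × List RNode)

namespace RE

variable {σ : Type}

/-- The transition relation of the HFπ machine: the head frame `(w, P)` is replaced by
exactly those of its wP-successors (one for each viable symbol) whose node-sets are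
not in the history `H`, and their node-sets are added to `H`. -/
inductive HFStep (e : RE σ) : HFConf σ → HFConf σ → Prop
  | mk {H : Finset (Finset RNode)} {w : List σ} {P : List RNode}
      {f : List (List σ × List RNode)} (l : List (σ × List RNode)) :
      (l.map Prod.fst).Nodup →
      (∀ x ∈ l, DRel e x.1 P x.2 ∧ x.2 ≠ [] ∧ x.2.toFinset ∉ H) →
      (∀ (a : σ) (r : List RNode), DRel e a P r → r ≠ [] → r.toFinset ∉ H →
        ∃ r', (a, r') ∈ l ∧ r'.toFinset = r.toFinset) →
      HFStep e (H, (w, P) :: f)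
        (H ∪ (l.map (fun x => x.2.toFinset)).toFinset,
         f ++ l.map (fun x => (w ++ [x.1], x.2)))

/-- Every starred subexpression of `e` has a body that does not match the empty string. -/
def NonNullableStars (e : RE σ) : Prop :=
  ∀ (p : RPos) (f : RE σ), e.sub p = some (star f) → ([] : List σ) ∉ lang f

end RE
namespace RE

variable {σ : Type}

/-- A step's consumed prefix can be replaced by any suffix. -/
lemma step_mono' {e : RE σ} {q q' : RNode} {u w' w1 : List σ}
    (h : PWStep e (q, u) (q', w1)) (hu : u = w' ++ w1) (v : List σ) :
    PWStep e (q, w' ++ v) (q', v) := by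
  have hnil : ∀ {u : List σ}, u = w' ++ u → w' = [] := by
    intro u hu
    have := congrArg List.length hu
    simp at this
    exact this
  have hone : ∀ {a : σ} {u : List σ}, a :: u = w' ++ u → w' = [a] := by
    intro a u hu
    cases w' with
    | nil => exact absurd (congrArg List.length hu) (by simp)
    | cons b t =>
        simp at hu
        obtain ⟨hb, ht⟩ := hu
        simp [hb, ht]
  cases h with
  | altL h1 => rw [hnil hu]; simpa using PWStep.altL h1
  | altR h1 => rw [hnil hu]; simpa using PWStep.altR h1
  | starK h1 => rw [hnil hu]; simpa using PWStep.starK h1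
  | starI h1 => rw [hnil hu]; simpa using PWStep.starI h1
  | catL h1 => rw [hnil hu]; simpa using PWStep.catL h1
  | epsC h1 => rw [hnil hu]; simpa using PWStep.epsC h1
  | symC h1 => rw [hone hu]; simpa using PWStep.symC h1

lemma step_mono {e : RE σ} {q q' : RNode} {w' w1 : List σ}
    (h : PWStep e (q, w' ++ w1) (q', w1)) (v : List σ) :
    PWStep e (q, w' ++ v) (q', v) := step_mono' h rfl v

/-- A step consumes a prefix of the input. -/
lemma step_prefix {e : RE σ} {q q' : RNode} {u v : List σ}
    (h : PWStep e (q, u) (q', v)) : ∃ w', u = w' ++ v := by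
  cases h with
  | symC h1 => exact ⟨[_], rfl⟩
  | altL h1 => exact ⟨[], rfl⟩
  | altR h1 => exact ⟨[], rfl⟩
  | starK h1 => exact ⟨[], rfl⟩
  | starI h1 => exact ⟨[], rfl⟩
  | catL h1 => exact ⟨[], rfl⟩
  | epsC h1 => exact ⟨[], rfl⟩

lemma path_to_run {e : RE σ} {t : List RNode} {p q : RNode} {w : List σ}
    (h : IsPath e t p w q) (W : List σ) :
    Relation.ReflTransGen (PWStep e) (p, w ++ W) (q, W) := by
  induction h generalizing W with
  | single p => exact Relation.ReflTransGen.refl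
  | @snoc t p q q' w w' w1 hpath hstep ih =>
      have h1 := ih (w' ++ W)
      have h2 := step_mono hstep W
      rw [List.append_assoc]
      exact h1.tail h2

lemma run_to_path {e : RE σ} {p : RNode} {u : List σ} {c : RConf σ}
    (h : Relation.ReflTransGen (PWStep e) (p, u) c) :
    ∃ w t, u = w ++ c.2 ∧ IsPath e t p w c.1 := by
  induction h with
  | refl => exact ⟨[], [p], rfl, IsPath.single p⟩
  | @tail b c hab hbc ih =>
      obtain ⟨q0, u0⟩ := b
      obtain ⟨q1, u1⟩ := c
      obtain ⟨w, t, hu, hpath⟩ := ih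
      obtain ⟨w'', hu0⟩ := step_prefix hbc
      subst hu0
      exact ⟨w ++ w'', t ++ [q1], by simp [hu], hpath.snoc hbc⟩

end RE

/-- Lemma 1: for nodes `p ≠ q` of the syntax tree of `e`, a path
`t : p ⇒[w] q` exists iff there is a PWπ run `⟨p; w·w'⟩ →* ⟨q; w'⟩`. -/
theorem path_iff_run {σ : Type} (e : RE σ) (p q : RPos)
    (hp : (e.sub p).isSome) (hq : (e.sub q).isSome) (hne : q ≠ p)
    (w w' : List σ) :
    (∃ t, RE.IsPath e t (some p) w (some q)) ↔
      Relation.ReflTransGen (RE.PWStep e) (some p, w ++ w') (some q, w') := by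
  constructor
  · rintro ⟨t, ht⟩
    exact RE.path_to_run ht w'
  · intro h
    obtain ⟨w0, t, hw, hpath⟩ := RE.run_to_path h
    have : w = w0 := List.append_cancel_right hw
    exact ⟨t, this ▸ hpath⟩
end

section
/- Let p0 be a node of the syntax tree of e with π(p0) a Kleene star with child p1. Suppose there exist two distinct paths t1 ≠ t2 with t1 : p1 ⇒[w] p0 and t2 : p1 ⇒[w] p0 for some string w; suppose x is a string with a path p_root ⇒[x] p0; let n ∈ ℕ and let z be a string such that no PWπ run from ⟨p_root; x·wⁿ·z⟩ reaches a configuration ⟨⊥; u⟩ for any string u. Then every finite sequence of PWFπ transitions from the initial configuration [⟨p_root; x·wⁿ·z⟩] to the empty list has length at least 2ⁿ. -/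
/-! ### Auxiliary development for the exponential blowup theorem -/

namespace RE

variable {σ : Type} {e : RE σ}

private lemma nsteps_zero {α : Type*} {R : α → α → Prop} {a b : α} :
    NSteps R 0 a b ↔ a = b := Iff.rfl

private lemma nsteps_succ {α : Type*} {R : α → α → Prop} {n : ℕ} {a b : α} :
    NSteps R (n + 1) a b ↔ ∃ c, R a c ∧ NSteps R n c b := Iff.rfl

/-- Characterization of how a `PWStep` treats the input string. -/
private lemma pw_cases {q q' : RNode} {v v' : List σ} (h : PWStep e (q, v) (q', v')) :
    (v = v' ∧ ∀ u, PWStep e (q, u) (q', u)) ∨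
    (∃ a, v = a :: v' ∧ ∀ u, PWStep e (q, a :: u) (q', u)) := by
  cases h with
  | altL hs => exact Or.inl ⟨rfl, fun u => .altL hs⟩
  | altR hs => exact Or.inl ⟨rfl, fun u => .altR hs⟩
  | starK hs => exact Or.inl ⟨rfl, fun u => .starK hs⟩
  | starI hs => exact Or.inl ⟨rfl, fun u => .starI hs⟩
  | catL hs => exact Or.inl ⟨rfl, fun u => .catL hs⟩
  | symC hs => exact Or.inr ⟨_, rfl, fun u => .symC hs⟩
  | epsC hs => exact Or.inl ⟨rfl, fun u => .epsC hs⟩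

/-- A `PWStep` consuming `w'` works for any remaining input. -/
private lemma pw_step_mono {q q' : RNode} {w' w1 : List σ}
    (h : PWStep e (q, w' ++ w1) (q', w1)) (u : List σ) : PWStep e (q, w' ++ u) (q', u) := by
  rcases pw_cases h with ⟨heq, hall⟩ | ⟨a, heq, hall⟩
  · have : w' = [] := by
      have := congrArg List.length heq
      simp at this
      exact this
    subst this; exact hall u
  · have : w' = [a] := by
      have : w' ++ w1 = [a] ++ w1 := by simpa using heq
      exact List.append_cancel_right this
    subst this; exact hall u

/-- The symbol consumed by a step from a node `p` is determined by `p`. -/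
private lemma pw_det_consume {p p1 p2 : RNode} {w1 w2 : List σ}
    (h1 : ∀ u, PWStep e (p, w1 ++ u) (p1, u)) (h2 : ∀ u, PWStep e (p, w2 ++ u) (p2, u)) :
    w1 = w2 := by
  have a1 := h1 []
  have a2 := h2 []
  rw [List.append_nil] at a1 a2
  cases a1 <;> cases a2 <;> simp_all

/-- Front-cons version of `IsPath`. -/
private inductive FPath (e : RE σ) : List RNode → RNode → List σ → RNode → Prop
  | single (p : RNode) : FPath e [p] p [] p
  | cons {p p' q : RNode} {t : List RNode} {w' w : List σ} :
      (∀ u, PWStep e (p, w' ++ u) (p', u)) → FPath e t p' w q →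
      FPath e (p :: t) p (w' ++ w) q

private lemma FPath.snoc {t : List RNode} {p q : RNode} {w : List σ}
    (h : FPath e t p w q) {w' : List σ} {q' : RNode}
    (hs : ∀ u, PWStep e (q, w' ++ u) (q', u)) :
    FPath e (t ++ [q']) p (w ++ w') q' := by
  induction h with
  | single p => simpa using FPath.cons hs (FPath.single q')
  | cons hstep htail ih =>
    simpa [List.append_assoc] using FPath.cons hstep (ih hs)

private lemma fpath_of_isPath {t : List RNode} {p q : RNode} {w : List σ}
    (h : IsPath e t p w q) : FPath e t p w q := by
  induction h with
  | single p => exact .single p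
  | snoc hpath hstep ih => exact ih.snoc (pw_step_mono hstep)

private lemma fpath_reach {t : List RNode} {p q : RNode} {w : List σ}
    (h : FPath e t p w q) (u : List σ) :
    Relation.ReflTransGen (PWStep e) (p, w ++ u) (q, u) := by
  induction h with
  | single p => exact Relation.ReflTransGen.refl
  | cons hstep htail ih =>
    rw [List.append_assoc]
    exact Relation.ReflTransGen.head (hstep _) ih

/-- `Elims e c k` : removing `c` from the top of the stack costs at least `k`
PWFπ steps, in any run ending in the empty stack. -/
private def Elims (e : RE σ) (c : RConf σ) (k : ℕ) : Prop :=
  ∀ m f, NSteps (PWFStep e) m (c :: f) [] →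
    ∃ m2, NSteps (PWFStep e) m2 f [] ∧ m2 + k ≤ m

private lemma elims_mono {c : RConf σ} {k j : ℕ} (h : Elims e c k) (hjk : j ≤ k) :
    Elims e c j := fun m f hm => by
  obtain ⟨m2, h2, hle⟩ := h m f hm
  exact ⟨m2, h2, by omega⟩

/-- Removing any configuration costs at least one step. -/
private lemma pop_bound : ∀ (m : ℕ) (c : RConf σ) (f : List (RConf σ)),
    NSteps (PWFStep e) m (c :: f) [] →
    ∃ m2, NSteps (PWFStep e) m2 f [] ∧ m2 + 1 ≤ m := by
  intro m
  induction m using Nat.strong_induction_on with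
  | _ m ih =>
    intro c f hm
    cases m with
    | zero => exact absurd (nsteps_zero.mp hm) (List.cons_ne_nil c f)
    | succ m =>
      obtain ⟨g, hg, hrest⟩ := nsteps_succ.mp hm
      cases hg with
      | one h1 h2 => obtain ⟨m2, h2', hle⟩ := ih m (by omega) _ _ hrest; exact ⟨m2, h2', by omega⟩
      | two h1 h2 h3 h4 =>
        obtain ⟨m2', h2', hle'⟩ := ih m (by omega) _ _ hrest
        obtain ⟨m2, h2'', hle''⟩ := ih m2' (by omega) _ _ h2'
        exact ⟨m2, h2'', by omega⟩
      | fail h1 => exact ⟨m, hrest, by omega⟩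

private lemma elims_one (c : RConf σ) : Elims e c 1 := fun m f hm => pop_bound m c f hm

private lemma elims_step_succ {c c' : RConf σ} {k : ℕ} (hs : PWStep e c c')
    (h : Elims e c' k) : Elims e c (k + 1) := by
  intro m f hm
  cases m with
  | zero => exact absurd (nsteps_zero.mp hm) (List.cons_ne_nil c f)
  | succ m =>
    obtain ⟨g, hg, hrest⟩ := nsteps_succ.mp hm
    cases hg with
    | one h1 hu =>
      rw [← hu c' hs] at hrest
      obtain ⟨m2, h2, hle⟩ := h m f hrest
      exact ⟨m2, h2, by omega⟩
    | two hs1 hs2 hne hall =>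
      rcases hall c' hs with heq | heq
      · rw [← heq] at hrest
        obtain ⟨m2', h2', hle'⟩ := h m _ hrest
        obtain ⟨m2, h2, hle⟩ := pop_bound m2' _ _ h2'
        exact ⟨m2, h2, by omega⟩
      · rw [← heq] at hrest
        obtain ⟨m2', h2', hle'⟩ := pop_bound m _ _ hrest
        obtain ⟨m2, h2, hle⟩ := h m2' f h2'
        exact ⟨m2, h2, by omega⟩
    | fail hno => exact absurd hs (hno c')

private lemma elims_step {c c' : RConf σ} {k : ℕ} (hs : PWStep e c c')
    (h : Elims e c' k) : Elims e c k :=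
  elims_mono (elims_step_succ hs h) (by omega)

private lemma elims_reach {c c' : RConf σ} {k : ℕ}
    (hr : Relation.ReflTransGen (PWStep e) c c') (h : Elims e c' k) : Elims e c k := by
  induction hr using Relation.ReflTransGen.head_induction_on with
  | refl => exact h
  | head hs _ ih => exact elims_step hs ih

private lemma elims_two {c c1 c2 : RConf σ} {k1 k2 : ℕ} (hs1 : PWStep e c c1)
    (hs2 : PWStep e c c2) (hne : c1 ≠ c2) (h1 : Elims e c1 k1) (h2 : Elims e c2 k2) :
    Elims e c (k1 + k2) := by
  intro m f hm
  cases m with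
  | zero => exact absurd (nsteps_zero.mp hm) (List.cons_ne_nil c f)
  | succ m =>
    obtain ⟨g, hg, hrest⟩ := nsteps_succ.mp hm
    cases hg with
    | one h1 hu => exact absurd ((hu c1 hs1).trans (hu c2 hs2).symm) hne
    | two hd1 hd2 hdne hall =>
      rcases hall c1 hs1 with he1 | he1 <;> rcases hall c2 hs2 with he2 | he2
      · exact absurd (he1.trans he2.symm) hne
      · rw [← he1, ← he2] at hrest
        obtain ⟨m2', h2', hle'⟩ := h1 m _ hrest
        obtain ⟨m2, h2'', hle''⟩ := h2 m2' f h2'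
        exact ⟨m2, h2'', by omega⟩
      · rw [← he1, ← he2] at hrest
        obtain ⟨m2', h2', hle'⟩ := h2 m _ hrest
        obtain ⟨m2, h2'', hle''⟩ := h1 m2' f h2'
        exact ⟨m2, h2'', by omega⟩
      · exact absurd (he1.trans he2.symm) hne
    | fail hno => exact absurd hs1 (hno c1)

private lemma elims_pump {c c1 : RConf σ} (hs : PWStep e c c1)
    (hr : Relation.ReflTransGen (PWStep e) c1 c) : ∀ k, Elims e c k := by
  intro k
  induction k with
  | zero => exact elims_mono (elims_one c) (by omega)
  | succ k ih => exact elims_step_succ hs (elims_reach hr ih)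

/-- Inversion for `FPath`. -/
private lemma fpath_cons_inv {t : List RNode} {p q : RNode} {w : List σ}
    (h : FPath e t p w q) :
    (t = [p] ∧ w = [] ∧ q = p) ∨
    ∃ p' t' w' w1, t = p :: t' ∧ w = w' ++ w1 ∧
      (∀ u, PWStep e (p, w' ++ u) (p', u)) ∧ FPath e t' p' w1 q := by
  cases h with
  | single p => exact Or.inl ⟨rfl, rfl, rfl⟩
  | cons hstep htail => exact Or.inr ⟨_, _, _, _, rfl, rfl, hstep, htail⟩

private lemma elims_double : ∀ (t1 t2 : List RNode) (p : RNode) (w : List σ) (q : RNode)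
    (rest : List σ) (k : ℕ), FPath e t1 p w q → FPath e t2 p w q → t1 ≠ t2 →
    Elims e (q, rest) k → Elims e (p, w ++ rest) (2 * k) := by
  intro t1
  induction t1 with
  | nil => intro t2 p w q rest k h1 h2 hne hk; cases h1
  | cons a t1' ih =>
    intro t2 p w q rest k h1 h2 hne hk
    rcases fpath_cons_inv h1 with ⟨ht1, hw, hq⟩ | ⟨p1', t1x, w1', w1, ht1, hw, hstep1, htail1⟩
    · injection ht1 with ha hb
      subst ha hb hw hq
      rcases fpath_cons_inv h2 with ⟨ht2, -, -⟩ | ⟨p2', t2', w2', w2, ht2, hw2, hstep2, htail2⟩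
      · exact absurd ht2.symm hne
      · obtain ⟨rfl, rfl⟩ := List.append_eq_nil_iff.mp hw2.symm
        have hstep' : PWStep e (q, rest) (p2', rest) := by simpa using hstep2 rest
        have hreach : Relation.ReflTransGen (PWStep e) (p2', rest) (q, rest) := by
          simpa using fpath_reach htail2 rest
        simpa using elims_pump hstep' hreach (2 * k)
    · injection ht1 with ha hb
      subst ha hb hw
      rcases fpath_cons_inv h2 with ⟨ht2, hw2, hq2⟩ | ⟨p2', t2', w2', w2, ht2, hw2, hstep2, htail2⟩
      · obtain ⟨rfl, rfl⟩ := List.append_eq_nil_iff.mp hw2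
        subst hq2
        have hstep' : PWStep e (q, rest) (p1', rest) := by simpa using hstep1 rest
        have hreach : Relation.ReflTransGen (PWStep e) (p1', rest) (q, rest) := by
          simpa using fpath_reach htail1 rest
        simpa using elims_pump hstep' hreach (2 * k)
      · have hww : w1' = w2' := pw_det_consume hstep1 hstep2
        subst hww
        have hw12 : w1 = w2 := by simpa using hw2
        subst hw12
        subst ht2
        by_cases hp : p1' = p2'
        · subst hp
          have hne' : t1' ≠ t2' := by
            intro hE; apply hne; rw [hE]
          have hmid := ih t2' p1' w1 q rest k htail1 htail2 hne' hk
          have hres := elims_step (hstep1 (w1 ++ rest)) hmid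
          rw [List.append_assoc]
          exact hres
        · have e1 : Elims e (p1', w1 ++ rest) k := elims_reach (fpath_reach htail1 rest) hk
          have e2 : Elims e (p2', w1 ++ rest) k := elims_reach (fpath_reach htail2 rest) hk
          have hcne : ((p1', w1 ++ rest) : RConf σ) ≠ (p2', w1 ++ rest) := by
            simp [hp]
          have hres := elims_two (hstep1 (w1 ++ rest)) (hstep2 (w1 ++ rest)) hcne e1 e2
          have h2k : 2 * k = k + k := by ring
          rw [h2k, List.append_assoc]
          exact hres

private lemma elims_main {p0 : RPos} {f1 : RE σ} (hstar : e.sub p0 = some (RE.star f1))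
    {w z : List σ} {t1 t2 : List RNode} (hne : t1 ≠ t2)
    (h1 : FPath e t1 (some (p0 ++ [false])) w (some p0))
    (h2 : FPath e t2 (some (p0 ++ [false])) w (some p0)) :
    ∀ n, Elims e (some p0, (List.replicate n w).flatten ++ z) (2 ^ n) := by
  intro n
  induction n with
  | zero => simpa using elims_one (e := e) (some p0, (List.replicate 0 w).flatten ++ z)
  | succ n ih =>
    have hkey := elims_double t1 t2 _ _ _ ((List.replicate n w).flatten ++ z) (2 ^ n)
      h1 h2 hne ih
    have hstep : PWStep e (some p0, w ++ ((List.replicate n w).flatten ++ z))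
        (some (p0 ++ [false]), w ++ ((List.replicate n w).flatten ++ z)) :=
      PWStep.starI hstar
    have hres := elims_step hstep hkey
    have h2p : (2 : ℕ) ^ (n + 1) = 2 * 2 ^ n := by ring
    rw [List.replicate_succ, List.flatten_cons, List.append_assoc, h2p]
    exact hres

end RE

/-- Theorem 1: if the Kleene expression at `p0` admits two distinct
paths from its body `p1` back to `p0` on the same string `w` (a pumpable string),
`x` is a prefix leading the matcher from the root to `p0`, and the suffix `z` makes
the whole input `x·wⁿ·z` fail to match, then every run of the backtracking PWFπ
machine from the initial configuration to the empty stack takes at least `2ⁿ` steps. -/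
theorem exponential_blowup {σ : Type} (e : RE σ) (p0 : RPos) (f1 : RE σ)
    (hstar : e.sub p0 = some (RE.star f1))
    (w x z : List σ) (n : ℕ)
    (t1 t2 : List RNode) (hne : t1 ≠ t2)
    (h1 : RE.IsPath e t1 (some (p0 ++ [false])) w (some p0))
    (h2 : RE.IsPath e t2 (some (p0 ++ [false])) w (some p0))
    (tx : List RNode) (hx : RE.IsPath e tx (some ([] : RPos)) x (some p0))
    (hfail : ¬ ∃ u : List σ, Relation.ReflTransGen (RE.PWStep e)
      (some ([] : RPos), x ++ (List.replicate n w).flatten ++ z) (none, u))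
    (m : ℕ)
    (hrun : NSteps (RE.PWFStep e) m
      [(some ([] : RPos), x ++ (List.replicate n w).flatten ++ z)] []) :
    2 ^ n ≤ m := by
  have hmain := RE.elims_main (z := z) hstar hne (RE.fpath_of_isPath h1)
    (RE.fpath_of_isPath h2) n
  have hreach : Relation.ReflTransGen (RE.PWStep e)
      (some ([] : RPos), x ++ ((List.replicate n w).flatten ++ z))
      (some p0, (List.replicate n w).flatten ++ z) :=
    RE.fpath_reach (RE.fpath_of_isPath hx) _
  have hroot := RE.elims_reach hreach hmain
  obtain ⟨m2, _, hle⟩ := hroot m [] (by rwa [List.append_assoc] at hrun)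
  omega
end

section
/- Let p0 be a node of the syntax tree of e with π(p0) a Kleene star with child p1, and suppose there exist two distinct paths t1 ≠ t2 with t1 : p1 ⇒[w] p0 and t2 : p1 ⇒[w] p0 for some string w. Then for every n ∈ ℕ there exist at least 2ⁿ pairwise distinct paths t : p0 ⇒[wⁿ] p0, where wⁿ denotes the n-fold concatenation of w. -/
namespace RE

variable {σ : Type}

theorem isPath_head {e : RE σ} {t : List RNode} {p q : RNode} {w : List σ}
    (h : IsPath e t p w q) : ∃ s, t = p :: s := by
  induction h with
  | single p => exact ⟨[], rfl⟩
  | @snoc t p q q' w w' w1 hs hstep ih =>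
      obtain ⟨s, rfl⟩ := ih
      exact ⟨s ++ [q'], by simp⟩

theorem isPath_getLast {e : RE σ} {t : List RNode} {p q : RNode} {w : List σ}
    (h : IsPath e t p w q) : t.getLast? = some q := by
  induction h with
  | single p => rfl
  | snoc _ _ _ => simp [List.getLast?_concat]

theorem isPath_ne_nil {e : RE σ} {t : List RNode} {p q : RNode} {w : List σ}
    (h : IsPath e t p w q) : t ≠ [] := by
  obtain ⟨s, rfl⟩ := isPath_head h; simp

theorem isPath_append {e : RE σ} {t' : List RNode} {q r : RNode} {w' : List σ}
    (h' : IsPath e t' q w' r) :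
    ∀ {t : List RNode} {p : RNode} {w : List σ}, IsPath e t p w q →
      IsPath e (t ++ t'.tail) p (w ++ w') r := by
  induction h' with
  | single m => intro t p w h; simpa using h
  | @snoc s a b c wv w2 w1 hs hstep ih =>
      intro t p w h
      obtain ⟨s0, hs0⟩ := isPath_head hs
      have h2 := IsPath.snoc (ih h) hstep
      rw [hs0]
      simpa [hs0, List.append_assoc] using h2

theorem loop_comp {e : RE σ} {p : RNode} {s s' : List RNode} {u u' : List σ}
    (h : IsPath e (p :: s) p u p) (h' : IsPath e (p :: s') p u' p) :
    IsPath e (p :: (s ++ s')) p (u ++ u') p := by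
  simpa using isPath_append h' h

/-- The symbol (as a string) consumed when stepping from node `q`. -/
def symOf (e : RE σ) (q : RNode) : List σ :=
  match e.subN q with
  | some (RE.sym a) => [a]
  | _ => []

/-- The string consumed along a list of nodes. -/
def labelOf (e : RE σ) (t : List RNode) : List σ := (t.map (symOf e)).flatten

theorem pwstep_string {e : RE σ} {q q' : RNode} {u v : List σ}
    (h : PWStep e (q, u) (q', v)) : u = symOf e q ++ v := by
  cases h with
  | altL hs => simp [symOf, subN, hs]
  | altR hs => simp [symOf, subN, hs]
  | starK hs => simp [symOf, subN, hs]
  | starI hs => simp [symOf, subN, hs]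
  | catL hs => simp [symOf, subN, hs]
  | symC hs => simp [symOf, subN, hs]
  | epsC hs => simp [symOf, subN, hs]

theorem isPath_label {e : RE σ} {t : List RNode} {p q : RNode} {w : List σ}
    (h : IsPath e t p w q) : labelOf e t = w ++ symOf e q := by
  induction h with
  | single p => simp [labelOf]
  | @snoc t p q q' w w' w1 hs hstep ih =>
      have h2 : w' ++ w1 = symOf e q ++ w1 := pwstep_string hstep
      have h3 : w' = symOf e q := List.append_cancel_right h2
      simp only [labelOf, List.map_append, List.flatten_append] at ih ⊢
      simp [ih, h3, List.append_assoc]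

theorem isPath_split {e : RE σ} {s : List RNode} {p q : RNode} {w : List σ}
    (h : IsPath e s p w q) :
    ∀ u v, s = u ++ v → u ≠ [] →
      ∃ w1 w2 m, w = w1 ++ w2 ∧ IsPath e u p w1 m ∧ IsPath e (m :: v) m w2 q := by
  induction h with
  | single p =>
      intro u v huv hu
      cases u with
      | nil => exact absurd rfl hu
      | cons a u' =>
          rw [List.cons_append] at huv
          injection huv with hh1 hh2
          obtain ⟨rfl, rfl⟩ := List.append_eq_nil_iff.mp hh2.symm
          subst hh1
          exact ⟨[], [], p, rfl, IsPath.single p, IsPath.single p⟩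
  | @snoc t p q q' w w' w1 hs hstep ih =>
      intro u v huv hu
      rcases eq_or_ne v [] with rfl | hv
      · rw [List.append_nil] at huv
        subst huv
        exact ⟨w ++ w', [], q', by simp, IsPath.snoc hs hstep, IsPath.single q'⟩
      · obtain ⟨v', x, rfl⟩ : ∃ v' x, v = v' ++ [x] :=
          ⟨v.dropLast, v.getLast hv, (List.dropLast_append_getLast hv).symm⟩
        rw [← List.append_assoc] at huv
        have hrev := congrArg List.reverse huv
        simp only [List.reverse_append, List.reverse_cons, List.reverse_nil,
          List.nil_append, List.cons_append, List.cons.injEq] at hrev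
        obtain ⟨hx, htail⟩ := hrev
        have hteq : u ++ v' = t := by
          have := congrArg List.reverse htail
          simpa using this.symm
        subst hx
        obtain ⟨w1', w2', m, hw, hp1, hp2⟩ := ih u v' hteq.symm hu
        refine ⟨w1', w2' ++ w', m, by simp [hw, List.append_assoc], hp1, ?_⟩
        have := IsPath.snoc hp2 hstep
        simpa using this

theorem loop_of_body {e : RE σ} {p0 : RPos} {f1 : RE σ}
    (hstar : e.sub p0 = some (RE.star f1)) {w : List σ} {t : List RNode}
    (h : IsPath e t (some (p0 ++ [false])) w (some p0)) :
    IsPath e (some p0 :: t) (some p0) w (some p0) := by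
  obtain ⟨s, rfl⟩ := isPath_head h
  have base : IsPath e [some p0] (some p0) [] (some p0) := IsPath.single _
  have hst : PWStep e (some p0, ([] : List σ) ++ []) (some (p0 ++ [false]), []) :=
    PWStep.starI hstar
  have step := IsPath.snoc base hst
  have := isPath_append h step
  simpa using this

theorem loop_pow {e : RE σ} {p : RNode} {s : List RNode} {u : List σ}
    (h : IsPath e (p :: s) p u p) (k : ℕ) :
    IsPath e (p :: (List.replicate k s).flatten) p (List.replicate k u).flatten p := by
  induction k with
  | zero => simpa using IsPath.single p
  | succ k ih =>
      have := loop_comp h ih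
      simpa [List.replicate_succ] using this

theorem pump_of_prefix {e : RE σ} {p0 : RPos} {f1 : RE σ}
    (hstar : e.sub p0 = some (RE.star f1)) {w : List σ}
    {ta tb : List RNode} (hne : ta ≠ tb) (hpre : ta <+: tb)
    (hla : IsPath e (some p0 :: ta) (some p0) w (some p0))
    (hlb : IsPath e (some p0 :: tb) (some p0) w (some p0))
    (n : ℕ) :
    ∃ T : Finset (List RNode), 2 ^ n ≤ T.card ∧
      ∀ t ∈ T, IsPath e t (some p0) (List.replicate n w).flatten (some p0) := by
  classical
  obtain ⟨z, rfl⟩ := hpre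
  have hz : z ≠ [] := by rintro rfl; simp at hne
  have hsym0 : symOf e (some p0) = ([] : List σ) := by simp [symOf, subN, hstar]
  obtain ⟨w1, w2, m, hw, hP1, hP2⟩ :=
    isPath_split hlb (some p0 :: ta) z (by simp) (by simp)
  have hm : m = some p0 := by
    have e1 := isPath_getLast hP1
    have e2 := isPath_getLast hla
    rw [e1] at e2
    exact Option.some_injective _ e2
  subst hm
  have hw1 : w1 = w := by
    have e1 := isPath_label hP1
    have e2 := isPath_label hla
    rw [e1, hsym0] at e2
    simpa using e2
  rw [hw1] at hw hP1
  have hw2 : w2 = [] := List.self_eq_append_right.mp hw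
  subst hw2
  -- hP2 : ε-loop at p0 along z
  have hzpos : 0 < z.length := List.length_pos_iff.mpr hz
  set F : ℕ → List RNode :=
    fun m => some p0 :: ((List.replicate m z).flatten ++ (List.replicate n ta).flatten) with hF
  have hFpath : ∀ m, IsPath e (F m) (some p0) (List.replicate n w).flatten (some p0) := by
    intro m
    have h1 := loop_pow hP2 m
    have h2 := loop_pow hla n
    have h3 := loop_comp h1 h2
    have hrep : (List.replicate m ([] : List σ)).flatten = [] := by simp
    rw [hrep] at h3
    simpa [hF] using h3
  have hFinj : Function.Injective F := by
    intro m1 m2 hFeq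
    have hlen := congrArg List.length hFeq
    simp only [hF, List.length_cons, List.length_append, List.length_flatten,
      List.map_replicate, List.sum_replicate, smul_eq_mul, Nat.add_right_cancel_iff,
      Nat.add_left_cancel_iff, add_left_inj, add_right_inj] at hlen
    exact Nat.eq_of_mul_eq_mul_right hzpos hlen
  refine ⟨(Finset.range (2 ^ n)).image F, ?_, ?_⟩
  · rw [Finset.card_image_of_injective _ hFinj, Finset.card_range]
  · intro t ht
    obtain ⟨m, _, rfl⟩ := Finset.mem_image.mp ht
    exact hFpath m

theorem pump_free {e : RE σ} {p0 : RPos} {w : List σ}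
    {ta tb : List RNode}
    (hnp : ¬ ta <+: tb) (hnp' : ¬ tb <+: ta)
    (hla : IsPath e (some p0 :: ta) (some p0) w (some p0))
    (hlb : IsPath e (some p0 :: tb) (some p0) w (some p0))
    (n : ℕ) :
    ∃ T : Finset (List RNode), 2 ^ n ≤ T.card ∧
      ∀ t ∈ T, IsPath e t (some p0) (List.replicate n w).flatten (some p0) := by
  classical
  have hta : ta ≠ [] := by rintro rfl; exact hnp (List.nil_prefix)
  have htb : tb ≠ [] := by rintro rfl; exact hnp' (List.nil_prefix)
  set choose : Bool → List RNode := fun b => if b then ta else tb with hch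
  have hchne : ∀ b, choose b ≠ [] := by
    intro b; cases b <;> simpa [hch]
  have hkey : ∀ b c : Bool, b ≠ c → ¬ (choose b <+: choose c) := by
    intro b c hbc
    cases b <;> cases c <;> simp [hch] at hbc ⊢ <;> assumption
  have hloopb : ∀ b, IsPath e (some p0 :: choose b) (some p0) w (some p0) := by
    intro b; cases b <;> simpa [hch]
  set G : List Bool → List RNode := fun bs => (bs.map choose).flatten with hG
  have hGpath : ∀ bs : List Bool,
      IsPath e (some p0 :: G bs) (some p0) (List.replicate bs.length w).flatten (some p0) := by
    intro bs
    induction bs with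
    | nil => simpa [hG] using IsPath.single (some p0)
    | cons b bs ih =>
        have := loop_comp (hloopb b) ih
        simpa [hG, List.replicate_succ] using this
  have hGinj : ∀ bs cs : List Bool, G bs = G cs → bs = cs := by
    intro bs
    induction bs with
    | nil =>
        intro cs h
        cases cs with
        | nil => rfl
        | cons c cs =>
            exfalso
            simp only [hG, List.map_nil, List.flatten_nil, List.map_cons,
              List.flatten_cons] at h
            exact hchne c (List.append_eq_nil_iff.mp h.symm).1
    | cons b bs ih =>
        intro cs h
        cases cs with
        | nil =>
            exfalso
            simp only [hG, List.map_nil, List.flatten_nil, List.map_cons,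
              List.flatten_cons] at h
            exact hchne b (List.append_eq_nil_iff.mp h).1
        | cons c cs =>
            simp only [hG, List.map_cons, List.flatten_cons] at h
            by_cases hbc : b = c
            · subst hbc
              have := List.append_cancel_left h
              rw [ih cs this]
            · exfalso
              have hpa : choose b <+: choose b ++ (bs.map choose).flatten :=
                List.prefix_append _ _
              have hpb : choose c <+: choose b ++ (bs.map choose).flatten := by
                rw [h]; exact List.prefix_append _ _
              rcases List.prefix_or_prefix_of_prefix hpa hpb with hp | hp
              · exact hkey b c hbc hp
              · exact hkey c b (Ne.symm hbc) hp
  refine ⟨Finset.image (fun g : Fin n → Bool => some p0 :: G (List.ofFn g)) Finset.univ, ?_, ?_⟩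
  · have hinj : Function.Injective (fun g : Fin n → Bool => some p0 :: G (List.ofFn g)) := by
      intro g1 g2 hg
      simp only [List.cons.injEq, true_and] at hg
      exact List.ofFn_injective (hGinj _ _ hg)
    rw [Finset.card_image_of_injective _ hinj]
    simp
  · intro t ht
    obtain ⟨g, _, rfl⟩ := Finset.mem_image.mp ht
    have := hGpath (List.ofFn g)
    simpa using this

end RE

/-- if the Kleene expression at `p0` has two distinct paths from its
body `p1` back to `p0` over the same string `w`, then for every `n` there are at
least `2ⁿ` pairwise distinct paths `p0 ⇒[wⁿ] p0`. -/
theorem pump_two_pow {σ : Type} (e : RE σ) (p0 : RPos) (f1 : RE σ)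
    (hstar : e.sub p0 = some (RE.star f1)) (w : List σ)
    (t1 t2 : List RNode) (hne : t1 ≠ t2)
    (h1 : RE.IsPath e t1 (some (p0 ++ [false])) w (some p0))
    (h2 : RE.IsPath e t2 (some (p0 ++ [false])) w (some p0))
    (n : ℕ) :
    ∃ T : Finset (List RNode), 2 ^ n ≤ T.card ∧
      ∀ t ∈ T, RE.IsPath e t (some p0) (List.replicate n w).flatten (some p0) := by
  have hl1 := RE.loop_of_body hstar h1
  have hl2 := RE.loop_of_body hstar h2
  by_cases hp12 : t1 <+: t2
  · exact RE.pump_of_prefix hstar hne hp12 hl1 hl2 n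
  by_cases hp21 : t2 <+: t1
  · exact RE.pump_of_prefix hstar (Ne.symm hne) hp21 hl2 hl1 n
  exact RE.pump_free hp12 hp21 hl1 hl2 n
end

section
/- For all strings w and w'', there exists a PWπ run ⟨p_root; w⟩ →* ⟨⊥; w''⟩ if and only if there exists a string w' with w = w'·w'' and w' ∈ L(e). In other words, the PWπ machine can terminate in state ⟨⊥; w''⟩ exactly when it has matched the regular expression e against some prefix w' of the input w. -/
namespace RE

variable {σ : Type}

lemma sub_nil (e : RE σ) : e.sub [] = some e := by cases e <;> rfl

lemma kont_nil (e : RE σ) : e.kont [] = none := by cases e <;> rfl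

lemma sub_append (e : RE σ) (p q : RPos) :
    e.sub (p ++ q) = (e.sub p).bind (fun f => f.sub q) := by
  induction p generalizing e with
  | nil => simp [sub]
  | cons b p ih =>
    cases e with
    | sym a => cases b <;> simp [sub]
    | eps => cases b <;> simp [sub]
    | cat f1 f2 => cases b <;> simp [sub, ih]
    | alt f1 f2 => cases b <;> simp [sub, ih]
    | star f1 => cases b <;> simp [sub, ih]

/-- Continuation of a child node, given the parent's subexpression `g`, parent
position `q`, parent continuation `k`, and which child `b`. -/
def kstep : RE σ → RPos → RNode → Bool → RNode
  | cat _ _, q, _, false => some (q ++ [true])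
  | cat _ _, _, k, true => k
  | alt _ _, _, k, _ => k
  | star _, q, _, false => some q
  | _, _, _, _ => none

lemma kontAux_snoc : ∀ (rest : RPos) (f : RE σ) (cur : RPos) (kc : RNode) (b : Bool),
    kontAux f cur (rest ++ [b]) kc =
      (f.sub rest).elim none (fun g => kstep g (cur ++ rest) (kontAux f cur rest kc) b) := by
  intro rest
  induction rest with
  | nil =>
    intro f cur kc b
    cases f <;> cases b <;> simp [kontAux, sub, kstep]
  | cons c rest ih =>
    intro f cur kc b
    cases f with
    | sym a => cases c <;> simp [kontAux, sub]
    | eps => cases c <;> simp [kontAux, sub]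
    | cat f1 f2 =>
      cases c <;> simp only [kontAux, sub, List.cons_append, List.append_eq] <;>
        rw [ih] <;> simp [List.append_assoc]
    | alt f1 f2 =>
      cases c <;> simp only [kontAux, sub, List.cons_append, List.append_eq] <;>
        rw [ih] <;> simp [List.append_assoc]
    | star f1 =>
      cases c <;> simp only [kontAux, sub, List.cons_append, List.append_eq]
      · rw [ih]; simp [List.append_assoc]
      · rfl

lemma kont_snoc (e : RE σ) (p : RPos) (b : Bool) :
    e.kont (p ++ [b]) = (e.sub p).elim none (fun g => kstep g p (e.kont p) b) := by
  have h := kontAux_snoc p e [] none b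
  simpa [kont] using h

lemma kont_cat_left {e : RE σ} {p : RPos} {f1 f2 : RE σ} (h : e.sub p = some (cat f1 f2)) :
    e.kont (p ++ [false]) = some (p ++ [true]) := by
  rw [kont_snoc, h]; rfl

lemma kont_cat_right {e : RE σ} {p : RPos} {f1 f2 : RE σ} (h : e.sub p = some (cat f1 f2)) :
    e.kont (p ++ [true]) = e.kont p := by
  rw [kont_snoc, h]; rfl

lemma kont_alt {e : RE σ} {p : RPos} {f1 f2 : RE σ} (b : Bool)
    (h : e.sub p = some (alt f1 f2)) : e.kont (p ++ [b]) = e.kont p := by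
  rw [kont_snoc, h]; cases b <;> rfl

lemma kont_star {e : RE σ} {p : RPos} {f1 : RE σ} (h : e.sub p = some (star f1)) :
    e.kont (p ++ [false]) = some p := by
  rw [kont_snoc, h]; rfl

lemma sub_cat_left {e : RE σ} {p : RPos} {f1 f2 : RE σ} (h : e.sub p = some (cat f1 f2)) :
    e.sub (p ++ [false]) = some f1 := by
  rw [sub_append, h]; simp [sub]

lemma sub_cat_right {e : RE σ} {p : RPos} {f1 f2 : RE σ} (h : e.sub p = some (cat f1 f2)) :
    e.sub (p ++ [true]) = some f2 := by
  rw [sub_append, h]; simp [sub]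

lemma sub_alt_left {e : RE σ} {p : RPos} {f1 f2 : RE σ} (h : e.sub p = some (alt f1 f2)) :
    e.sub (p ++ [false]) = some f1 := by
  rw [sub_append, h]; simp [sub]

lemma sub_alt_right {e : RE σ} {p : RPos} {f1 f2 : RE σ} (h : e.sub p = some (alt f1 f2)) :
    e.sub (p ++ [true]) = some f2 := by
  rw [sub_append, h]; simp [sub]

lemma sub_star {e : RE σ} {p : RPos} {f1 : RE σ} (h : e.sub p = some (star f1)) :
    e.sub (p ++ [false]) = some f1 := by
  rw [sub_append, h]; simp [sub]

/-- Completeness: matching a subexpression yields a run to its continuation. -/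
lemma match_run (e : RE σ) : ∀ (f : RE σ) (p : RPos), e.sub p = some f →
    ∀ (w' u : List σ), w' ∈ f.lang →
      Relation.ReflTransGen (PWStep e) (some p, w' ++ u) (e.kont p, u) := by
  intro f
  induction f with
  | sym a =>
    intro p hp w' u hw
    have : w' = [a] := hw
    subst this
    exact Relation.ReflTransGen.single (PWStep.symC hp)
  | eps =>
    intro p hp w' u hw
    have : w' = [] := hw
    subst this
    exact Relation.ReflTransGen.single (PWStep.epsC hp)
  | cat f1 f2 ih1 ih2 =>
    intro p hp w' u hw
    obtain ⟨a, ha, b, hb, hab⟩ := hw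
    subst hab
    have s1 : Relation.ReflTransGen (PWStep e) (some p, (a ++ b) ++ u)
        (some (p ++ [false]), a ++ (b ++ u)) := by
      rw [List.append_assoc]
      exact Relation.ReflTransGen.single (PWStep.catL hp)
    have s2 := ih1 (p ++ [false]) (sub_cat_left hp) a (b ++ u) ha
    rw [kont_cat_left hp] at s2
    have s3 := ih2 (p ++ [true]) (sub_cat_right hp) b u hb
    rw [kont_cat_right hp] at s3
    exact s1.trans (s2.trans s3)
  | alt f1 f2 ih1 ih2 =>
    intro p hp w' u hw
    rcases hw with hw | hw
    · have s := ih1 (p ++ [false]) (sub_alt_left hp) w' u hw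
      rw [kont_alt false hp] at s
      exact (Relation.ReflTransGen.single (PWStep.altL hp)).trans s
    · have s := ih2 (p ++ [true]) (sub_alt_right hp) w' u hw
      rw [kont_alt true hp] at s
      exact (Relation.ReflTransGen.single (PWStep.altR hp)).trans s
  | star f1 ih =>
    intro p hp w' u hw
    rw [lang] at hw
    obtain ⟨L, hL, hmem⟩ := Language.mem_kstar.mp hw
    subst hL
    induction L with
    | nil => exact Relation.ReflTransGen.single (PWStep.starK hp)
    | cons y L ihL =>
      have hy : y ∈ f1.lang := hmem y (by simp)
      have s1 : Relation.ReflTransGen (PWStep e) (some p, (y :: L).flatten ++ u)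
          (some (p ++ [false]), y ++ (L.flatten ++ u)) := by
        simp only [List.flatten_cons, List.append_assoc]
        exact Relation.ReflTransGen.single (PWStep.starI hp)
      have s2 := ih (p ++ [false]) (sub_star hp) y (L.flatten ++ u) hy
      rw [kont_star hp] at s2
      have s3 := ihL (fun z hz => hmem z (by simp [hz]))
        (Language.join_mem_kstar (fun z hz => hmem z (by simp [hz])))
      exact s1.trans (s2.trans s3)

lemma no_step_none {e : RE σ} {w : List σ} {c : RConf σ} : ¬ PWStep e (none, w) c := by
  intro h; cases h

lemma nsteps_tail {α : Type*} {R : α → α → Prop} :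
    ∀ {n : ℕ} {a c b : α}, NSteps R n a c → R c b → NSteps R (n + 1) a b := by
  intro n
  induction n with
  | zero => intro a c b h hR; cases h; exact ⟨b, hR, rfl⟩
  | succ n ih =>
    intro a c b h hR
    obtain ⟨d, hd, hrest⟩ := h
    exact ⟨d, hd, ih hrest hR⟩

lemma nsteps_of_rtg {α : Type*} {R : α → α → Prop} {a b : α}
    (h : Relation.ReflTransGen R a b) : ∃ n, NSteps R n a b := by
  induction h with
  | refl => exact ⟨0, rfl⟩
  | tail _ hR ih => obtain ⟨n, hn⟩ := ih; exact ⟨n + 1, nsteps_tail hn hR⟩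

lemma rtg_of_nsteps {α : Type*} {R : α → α → Prop} :
    ∀ {n : ℕ} {a b : α}, NSteps R n a b → Relation.ReflTransGen R a b := by
  intro n
  induction n with
  | zero => intro a b h; cases h; exact Relation.ReflTransGen.refl
  | succ n ih =>
    intro a b h
    obtain ⟨c, hc, hrest⟩ := h
    exact Relation.ReflTransGen.head hc (ih hrest)

lemma nsteps_none {e : RE σ} {w'' : List σ} :
    ∀ {m : ℕ} {u : List σ}, NSteps (PWStep e) m ((none : RNode), u) (none, w'') → u = w'' := by
  intro m
  cases m with
  | zero => intro u h; exact congrArg Prod.snd h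
  | succ m => intro u h; obtain ⟨c, hc, _⟩ := h; exact absurd hc no_step_none

/-- Soundness: a run from `p` to `⊥` matches the subexpression at `p` and then
continues from `k(p)`. -/
lemma sound (e : RE σ) (w'' : List σ) :
    ∀ (n : ℕ) (p : RPos) (f : RE σ) (w : List σ), e.sub p = some f →
      NSteps (PWStep e) n (some p, w) (none, w'') →
      ∃ (w' u : List σ) (m : ℕ), w = w' ++ u ∧ w' ∈ f.lang ∧ m ≤ n ∧
        NSteps (PWStep e) m (e.kont p, u) (none, w'') := by
  intro n
  induction n using Nat.strong_induction_on with
  | _ n ih =>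
    intro p f w hsub hrun
    match n, hrun with
    | 0, hrun => exact absurd (congrArg Prod.fst hrun) (by simp)
    | Nat.succ n, ⟨c, hstep, hrest⟩ =>
      cases f with
      | sym a =>
        cases hstep with
        | altL h => rw [hsub] at h; cases h
        | altR h => rw [hsub] at h; cases h
        | starK h => rw [hsub] at h; cases h
        | starI h => rw [hsub] at h; cases h
        | catL h => rw [hsub] at h; cases h
        | epsC h => rw [hsub] at h; cases h
        | @symC _ b w1 h =>
          rw [hsub] at h
          injection h with h; injection h with h; subst h
          exact ⟨[a], w1, n, rfl, rfl, Nat.le_succ n, hrest⟩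
      | eps =>
        cases hstep with
        | altL h => rw [hsub] at h; cases h
        | altR h => rw [hsub] at h; cases h
        | starK h => rw [hsub] at h; cases h
        | starI h => rw [hsub] at h; cases h
        | catL h => rw [hsub] at h; cases h
        | symC h => rw [hsub] at h; cases h
        | epsC h =>
          exact ⟨[], w, n, rfl, rfl, Nat.le_succ n, hrest⟩
      | cat f1 f2 =>
        cases hstep with
        | altL h => rw [hsub] at h; cases h
        | altR h => rw [hsub] at h; cases h
        | starK h => rw [hsub] at h; cases h
        | starI h => rw [hsub] at h; cases h
        | symC h => rw [hsub] at h; cases h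
        | epsC h => rw [hsub] at h; cases h
        | catL h =>
          obtain ⟨w1, u1, m1, heq1, hw1, hm1, hrun1⟩ :=
            ih n (Nat.lt_succ_self n) (p ++ [false]) f1 w (sub_cat_left hsub) hrest
          rw [kont_cat_left hsub] at hrun1
          obtain ⟨w2, u2, m2, heq2, hw2, hm2, hrun2⟩ :=
            ih m1 (Nat.lt_succ_of_le hm1) (p ++ [true]) f2 u1 (sub_cat_right hsub) hrun1
          rw [kont_cat_right hsub] at hrun2
          refine ⟨w1 ++ w2, u2, m2, ?_, ⟨w1, hw1, w2, hw2, rfl⟩,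
            le_trans hm2 (le_trans hm1 (Nat.le_succ n)), hrun2⟩
          rw [heq1, heq2, List.append_assoc]
      | alt f1 f2 =>
        cases hstep with
        | starK h => rw [hsub] at h; cases h
        | starI h => rw [hsub] at h; cases h
        | catL h => rw [hsub] at h; cases h
        | symC h => rw [hsub] at h; cases h
        | epsC h => rw [hsub] at h; cases h
        | altL h =>
          obtain ⟨w1, u1, m1, heq1, hw1, hm1, hrun1⟩ :=
            ih n (Nat.lt_succ_self n) (p ++ [false]) f1 w (sub_alt_left hsub) hrest
          rw [kont_alt false hsub] at hrun1
          exact ⟨w1, u1, m1, heq1, Or.inl hw1, le_trans hm1 (Nat.le_succ n), hrun1⟩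
        | altR h =>
          obtain ⟨w1, u1, m1, heq1, hw1, hm1, hrun1⟩ :=
            ih n (Nat.lt_succ_self n) (p ++ [true]) f2 w (sub_alt_right hsub) hrest
          rw [kont_alt true hsub] at hrun1
          exact ⟨w1, u1, m1, heq1, Or.inr hw1, le_trans hm1 (Nat.le_succ n), hrun1⟩
      | star f1 =>
        cases hstep with
        | altL h => rw [hsub] at h; cases h
        | altR h => rw [hsub] at h; cases h
        | catL h => rw [hsub] at h; cases h
        | symC h => rw [hsub] at h; cases h
        | epsC h => rw [hsub] at h; cases h
        | starK h =>
          exact ⟨[], w, n, rfl, Language.nil_mem_kstar _, Nat.le_succ n, hrest⟩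
        | starI h =>
          obtain ⟨w1, u1, m1, heq1, hw1, hm1, hrun1⟩ :=
            ih n (Nat.lt_succ_self n) (p ++ [false]) f1 w (sub_star hsub) hrest
          rw [kont_star hsub] at hrun1
          obtain ⟨w2, u2, m2, heq2, hw2, hm2, hrun2⟩ :=
            ih m1 (Nat.lt_succ_of_le hm1) p (star f1) u1 hsub hrun1
          refine ⟨w1 ++ w2, u2, m2, ?_, ?_,
            le_trans hm2 (le_trans hm1 (Nat.le_succ n)), hrun2⟩
          · rw [heq1, heq2, List.append_assoc]
          · rw [lang] at hw2 ⊢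
            obtain ⟨L, hL, hmem⟩ := Language.mem_kstar.mp hw2
            refine Language.mem_kstar.mpr ⟨w1 :: L, by simp [hL], ?_⟩
            intro y hy
            rcases List.mem_cons.mp hy with hy | hy
            · exact hy ▸ hw1
            · exact hmem y hy

end RE

/-- the PWπ machine can run `⟨p_root; w⟩ →* ⟨⊥; w''⟩` iff `e`
matches some prefix `w'` of `w` with `w = w'·w''`. -/
theorem run_iff_prefix_match {σ : Type} (e : RE σ) (w w'' : List σ) :
    Relation.ReflTransGen (RE.PWStep e) (some ([] : RPos), w) (none, w'') ↔
      ∃ w', w = w' ++ w'' ∧ w' ∈ RE.lang e := by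
  constructor
  · intro h
    obtain ⟨n, hn⟩ := RE.nsteps_of_rtg h
    obtain ⟨w', u, m, heq, hw', _, hrun⟩ :=
      RE.sound e w'' n [] e w (RE.sub_nil e) hn
    have hk : e.kont [] = none := RE.kont_nil e
    rw [hk] at hrun
    exact ⟨w', by rw [heq, RE.nsteps_none hrun], hw'⟩
  · rintro ⟨w', rfl, hw'⟩
    have h := RE.match_run e e [] (RE.sub_nil e) w' w'' hw'
    have hk : e.kont [] = none := RE.kont_nil e
    rwa [hk] at h
end

section
/- Soundness of the backtracking matcher's success: if the PWFπ machine, started from the initial configuration [⟨p_root; w⟩], reaches (by a finite sequence of PWFπ transitions) a configuration whose head is ⟨⊥; w''⟩, then there exists a PWπ run ⟨p_root; w⟩ →* ⟨⊥; w''⟩. -/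
/-- soundness of backtracking success: if the PWFπ machine starting
from `[⟨p_root; w⟩]` reaches a configuration whose head is `⟨⊥; w''⟩`, then there is
a PWπ run `⟨p_root; w⟩ →* ⟨⊥; w''⟩`. -/
theorem pwf_success_sound {σ : Type} (e : RE σ) (w w'' : List σ) (f : List (RConf σ))
    (h : Relation.ReflTransGen (RE.PWFStep e) [(some ([] : RPos), w)]
      ((none, w'') :: f)) :
    Relation.ReflTransGen (RE.PWStep e) (some ([] : RPos), w) (none, w'') := by
  suffices h' : ∀ g, Relation.ReflTransGen (RE.PWFStep e) [(some ([] : RPos), w)] g →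
      ∀ c ∈ g, Relation.ReflTransGen (RE.PWStep e) (some ([] : RPos), w) c from
    h' _ h _ (List.mem_cons_self)
  intro g hg
  induction hg with
  | refl =>
    intro c hc
    simp only [List.mem_singleton] at hc
    subst hc; exact Relation.ReflTransGen.refl
  | tail _ hstep ih =>
    intro c hc
    cases hstep with
    | one hs _ =>
      rcases List.mem_cons.mp hc with rfl | hct
      · exact (ih _ (List.mem_cons_self)).tail hs
      · exact ih _ (List.mem_cons_of_mem _ hct)
    | two hs1 hs2 _ _ =>
      rcases List.mem_cons.mp hc with rfl | hc2
      · exact (ih _ (List.mem_cons_self)).tail hs1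
      · rcases List.mem_cons.mp hc2 with rfl | hct
        · exact (ih _ (List.mem_cons_self)).tail hs2
        · exact ih _ (List.mem_cons_of_mem _ hct)
    | fail _ =>
      exact ih _ (List.mem_cons_of_mem _ hc)
end

section
/- Correctness of the derive operation: assume that for every subexpression of e of the form f*, the body f does not match the empty string (so evolve and D are well-defined). Then for every list of nodes P, every symbol a ∈ Σ, and every node q: q occurs in D_a(P) if and only if there exists a node p occurring in P and a node h such that there is a path t : p ⇒[ε] h using only non-consuming PWπ transitions, π(h) = a, and k(h) = q. -/
namespace REproofAux

open RE

variable {σ : Type} {e : RE σ}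

lemma pwstep_same_input {p q : RNode} {w : List σ} (h : PWStep e (p, w) (q, w)) :
    EpsStep e p q := by
  cases h with
  | altL h => exact PWStep.altL h
  | altR h => exact PWStep.altR h
  | starK h => exact PWStep.starK h
  | starI h => exact PWStep.starI h
  | catL h => exact PWStep.catL h
  | epsC h => exact PWStep.epsC h

lemma epsstep_any_input {p q : RNode} (h : EpsStep e p q) (w : List σ) :
    PWStep e (p, w) (q, w) := by
  cases h with
  | altL h => exact PWStep.altL h
  | altR h => exact PWStep.altR h
  | starK h => exact PWStep.starK h
  | starI h => exact PWStep.starI h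
  | catL h => exact PWStep.catL h
  | epsC h => exact PWStep.epsC h

lemma path_iff_rtg (p h : RNode) :
    (∃ t, IsPath e t p ([] : List σ) h) ↔ Relation.ReflTransGen (EpsStep e) p h := by
  constructor
  · rintro ⟨t, hp⟩
    have key : ∀ (t : List RNode) (p : RNode) (w : List σ) (h : RNode),
        IsPath e t p w h → w = [] → Relation.ReflTransGen (EpsStep e) p h := by
      intro t p w h hp
      induction hp with
      | single => intro; exact Relation.ReflTransGen.refl
      | snoc hp hs ih =>
        intro hw
        rcases List.append_eq_nil_iff.mp hw with ⟨hw1, hw2⟩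
        subst hw1; subst hw2
        exact Relation.ReflTransGen.tail (ih rfl) (pwstep_same_input hs)
    exact key t p [] h hp rfl
  · intro hr
    induction hr with
    | refl => exact ⟨[p], IsPath.single p⟩
    | tail _ hs ih =>
      rcases ih with ⟨t, ht⟩
      exact ⟨t ++ [_], IsPath.snoc (w' := []) (w1 := []) ht hs⟩

lemma sym_no_step {p q : RNode} {b : σ} (hs : e.subN p = some (RE.sym b)) :
    ¬ EpsStep e p q := by
  intro hst
  cases p with
  | none => simp [RE.subN] at hs
  | some p =>
    simp only [RE.subN] at hs
    cases hst with
    | altL h => rw [h] at hs; simp at hs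
    | altR h => rw [h] at hs; simp at hs
    | starK h => rw [h] at hs; simp at hs
    | starI h => rw [h] at hs; simp at hs
    | catL h => rw [h] at hs; simp at hs
    | epsC h => rw [h] at hs; simp at hs

lemma sym_rtg_eq {p h : RNode} {b : σ} (hs : e.subN p = some (RE.sym b))
    (hr : Relation.ReflTransGen (EpsStep e) p h) : h = p := by
  rcases Relation.ReflTransGen.cases_head hr with rfl | ⟨c, hc, _⟩
  · rfl
  · exact absurd hc (sym_no_step hs)

end REproofAux

/-- correctness of derive: assuming all starred bodies of `e` are
non-nullable, a node `q` occurs in `D_a(P)` iff some `p` in `P` reaches, by a path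
`p ⇒[ε] h` of non-consuming transitions, a node `h` with `π(h) = a` and `k(h) = q`. -/
theorem derive_correct {σ : Type} (e : RE σ) (hnn : RE.NonNullableStars e)
    (a : σ) (P r : List RNode) (hd : RE.DRel e a P r) (q : RNode) :
    q ∈ r ↔ ∃ p ∈ P, ∃ h : RNode,
      (∃ t, RE.IsPath e t p ([] : List σ) h) ∧
      e.subN h = some (RE.sym a) ∧ e.kontN h = q := by
  simp only [REproofAux.path_iff_rtg]
  induction hd with
  | nil => simp
  | symNe hs hne _ ih =>
    rw [ih]
    constructor
    · rintro ⟨p, hp, rest⟩; exact ⟨p, List.mem_cons_of_mem _ hp, rest⟩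
    · rintro ⟨p, hp, h', hr, hsym, hk⟩
      rcases List.mem_cons.mp hp with rfl | hp
      · have heq := REproofAux.sym_rtg_eq hs hr
        subst heq
        exact absurd (by have h2 := hs.symm.trans hsym; injection h2 with h3; injection h3) hne
      · exact ⟨p, hp, h', hr, hsym, hk⟩
  | symEq hs _ ih =>
    simp only [List.mem_cons, ih]
    constructor
    · rintro (rfl | ⟨p, hp, rest⟩)
      · exact ⟨_, Or.inl rfl, _, Relation.ReflTransGen.refl, hs, rfl⟩
      · exact ⟨p, Or.inr hp, rest⟩
    · rintro ⟨p, hp, h', hr, hsym, hk⟩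
      rcases hp with rfl | hp
      · left; have heq := REproofAux.sym_rtg_eq hs hr; subst heq; exact hk.symm
      · right; exact ⟨p, hp, h', hr, hsym, hk⟩
  | ev hns hev _ ih =>
    rw [ih]
    constructor
    · rintro ⟨p, hp, h', hr, hsym, hk⟩
      rcases List.mem_append.mp hp with hp | hp
      · have hL := (hev p).mp hp
        have heq := REproofAux.sym_rtg_eq hL.2.choose_spec hr
        subst heq
        exact ⟨_, List.mem_cons_self, h', hL.1, hsym, hk⟩
      · exact ⟨p, List.mem_cons_of_mem _ hp, h', hr, hsym, hk⟩
    · rintro ⟨p, hp, h', hr, hsym, hk⟩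
      rcases List.mem_cons.mp hp with rfl | hp
      · have hmem : h' ∈ _ := (hev h').mpr ⟨hr, a, hsym⟩
        exact ⟨h', List.mem_append.mpr (Or.inl hmem), h', Relation.ReflTransGen.refl, hsym, hk⟩
      · exact ⟨p, List.mem_append.mpr (Or.inr hp), h', hr, hsym, hk⟩
end

section
/- wP frame invariant: assume that for every subexpression of e of the form f*, the body f does not match the empty string (so evolve and D are well-defined). Fix a node p1 of the syntax tree of e. If (ε, [p1]) →* (w, P) is a finite sequence of wP-frame transitions with w nonempty, then for every node q: q occurs in P if and only if there exists a path t : p1 ⇒[w] q whose final transition consumes the last symbol of w (i.e., the last step of t is a symbol-consuming PWπ transition). -/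
namespace RE

variable {σ : Type}

lemma step_cases {e : RE σ} {p q : RNode} {u v : List σ} (h : PWStep e (p, u) (q, v)) :
    (u = v ∧ ∀ w, PWStep e (p, w) (q, w)) ∨
    (∃ a, u = a :: v ∧ e.subN p = some (sym a) ∧ q = e.kontN p) := by
  cases h with
  | altL h => exact Or.inl ⟨rfl, fun w => .altL h⟩
  | altR h => exact Or.inl ⟨rfl, fun w => .altR h⟩
  | starK h => exact Or.inl ⟨rfl, fun w => .starK h⟩
  | starI h => exact Or.inl ⟨rfl, fun w => .starI h⟩
  | catL h => exact Or.inl ⟨rfl, fun w => .catL h⟩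
  | symC h => exact Or.inr ⟨_, rfl, h, rfl⟩
  | epsC h => exact Or.inl ⟨rfl, fun w => .epsC h⟩

lemma consume_of {e : RE σ} {h : RNode} {a : σ} (h1 : e.subN h = some (sym a)) :
    PWStep e (h, [a]) (e.kontN h, []) := by
  cases h with
  | none => simp [subN] at h1
  | some p => exact .symC h1

lemma consume_inv {e : RE σ} {h q : RNode} {a : σ}
    (hs : PWStep e (h, [a]) (q, ([] : List σ))) :
    e.subN h = some (sym a) ∧ q = e.kontN h := by
  rcases step_cases hs with ⟨h1, _⟩ | ⟨a', ha', hsym, hq⟩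
  · simp at h1
  · obtain rfl : a' = a := by simpa using ha'.symm
    exact ⟨hsym, hq⟩

lemma sym_no_eps {e : RE σ} {h q : RNode} {b : σ}
    (hs : e.subN h = some (sym b)) : ¬ EpsStep e h q := by
  intro hstep
  cases hstep with
  | altL h' => simp [subN, h'] at hs
  | altR h' => simp [subN, h'] at hs
  | starK h' => simp [subN, h'] at hs
  | starI h' => simp [subN, h'] at hs
  | catL h' => simp [subN, h'] at hs
  | epsC h' => simp [subN, h'] at hs

lemma rtg_sym {e : RE σ} {h q : RNode} {b : σ} (hs : e.subN h = some (sym b))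
    (hr : Relation.ReflTransGen (EpsStep e) h q) : q = h := by
  rcases Relation.ReflTransGen.cases_head hr with rfl | ⟨c, hc, _⟩
  · rfl
  · exact absurd hc (sym_no_eps hs)

lemma D_mem {e : RE σ} {a : σ} {P r : List RNode} (hd : DRel e a P r) (q : RNode) :
    q ∈ r ↔ ∃ h ∈ P, ∃ h', Relation.ReflTransGen (EpsStep e) h h' ∧
      e.subN h' = some (sym a) ∧ q = e.kontN h' := by
  induction hd with
  | nil => simp
  | @symNe h t r b hs hne hd ih =>
      rw [ih]; constructor
      · rintro ⟨h2, hh2, rest⟩; exact ⟨h2, List.mem_cons_of_mem _ hh2, rest⟩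
      · rintro ⟨h2, hh2, h', hr, hs', hq⟩
        rcases List.mem_cons.mp hh2 with rfl | hh2
        · have heq := rtg_sym hs hr
          rw [heq, hs] at hs'
          exact absurd (by simpa using hs') hne
        · exact ⟨h2, hh2, h', hr, hs', hq⟩
  | @symEq h t r hs hd ih =>
      rw [List.mem_cons, ih]; constructor
      · rintro (rfl | ⟨h2, hh2, rest⟩)
        · exact ⟨h, List.mem_cons_self, h, Relation.ReflTransGen.refl, hs, rfl⟩
        · exact ⟨h2, List.mem_cons_of_mem _ hh2, rest⟩
      · rintro ⟨h2, hh2, h', hr, hs', hq⟩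
        rcases List.mem_cons.mp hh2 with rfl | hh2
        · have heq := rtg_sym hs hr
          subst heq; exact Or.inl hq
        · exact Or.inr ⟨h2, hh2, h', hr, hs', hq⟩
  | @ev h t r L hns hev hd ih =>
      rw [ih]; constructor
      · rintro ⟨h2, hh2, h', hr, hs', hq⟩
        rcases List.mem_append.mp hh2 with hL | ht
        · obtain ⟨hrh, b, hsb⟩ := (hev h2).mp hL
          have heq := rtg_sym hsb hr
          subst heq
          exact ⟨h, List.mem_cons_self, h', hrh, hs', hq⟩
        · exact ⟨h2, List.mem_cons_of_mem _ ht, h', hr, hs', hq⟩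
      · rintro ⟨h2, hh2, h', hr, hs', hq⟩
        rcases List.mem_cons.mp hh2 with rfl | ht
        · have hL : h' ∈ L := (hev h').mpr ⟨hr, a, hs'⟩
          exact ⟨h', List.mem_append_left _ hL, h', Relation.ReflTransGen.refl, hs', hq⟩
        · exact ⟨h2, List.mem_append_right _ ht, h', hr, hs', hq⟩

lemma path_eps_fwd {e : RE σ} {t : List RNode} {p q : RNode} {w : List σ}
    (h : IsPath e t p w q) : w = [] → Relation.ReflTransGen (EpsStep e) p q := by
  induction h with
  | single p => intro; exact Relation.ReflTransGen.refl
  | @snoc t p q q' w w' w1 hp hstep ih =>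
      intro hw
      rcases List.append_eq_nil_iff.mp hw with ⟨hw0, hw1⟩
      rcases step_cases hstep with ⟨heq, hall⟩ | ⟨a, ha, _, _⟩
      · exact (ih hw0).tail (hall [])
      · rw [hw1] at ha
        have := congrArg List.length ha; simp at this

lemma path_snoc_eps {e : RE σ} {t : List RNode} {p q q' : RNode} {w : List σ}
    (h : IsPath e t p w q) (hr : Relation.ReflTransGen (EpsStep e) q q') :
    ∃ t2, IsPath e t2 p w q' := by
  induction hr with
  | refl => exact ⟨t, h⟩
  | tail hb hstep ih =>
      rename_i b c
      obtain ⟨t2, ht2⟩ := ih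
      refine ⟨t2 ++ [c], ?_⟩
      have := IsPath.snoc (w' := []) (w1 := []) ht2 hstep
      simpa using this

lemma path_eps_bwd {e : RE σ} {p q : RNode}
    (hr : Relation.ReflTransGen (EpsStep e) p q) : ∃ t, IsPath e t p [] q :=
  path_snoc_eps (IsPath.single p) hr

lemma path_decomp {e : RE σ} {t : List RNode} {p q : RNode} {w : List σ}
    (h : IsPath e t p w q) :
    ∀ u b, w = u ++ [b] →
      ∃ t1 h1, IsPath e t1 p u h1 ∧ e.subN h1 = some (sym b) ∧
        Relation.ReflTransGen (EpsStep e) (e.kontN h1) q := by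
  induction h with
  | single p => intro u b hub; exact absurd hub.symm (by simp)
  | @snoc t p q q' w w' w1 hp hstep ih =>
      intro u b hub
      rcases step_cases hstep with ⟨heq, hall⟩ | ⟨a, ha, hs, hq'⟩
      · have hw' : w' = [] := by
          have := congrArg List.length heq; simp at this
          exact this
        subst hw'
        obtain ⟨t1, h1, hp1, hs1, hrr⟩ := ih u b (by simpa using hub)
        exact ⟨t1, h1, hp1, hs1, hrr.tail (hall [])⟩
      · have hw' : w' = [a] := by
          cases w' with
          | nil =>
              have := congrArg List.length ha; simp at this
          | cons c w'' =>
              simp only [List.cons_append, List.cons.injEq] at ha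
              obtain ⟨rfl, h2⟩ := ha
              have := congrArg List.length h2; simp at this
              simp [this]
        subst hw'
        obtain ⟨rfl, hab⟩ := List.append_inj' hub rfl
        obtain rfl : a = b := by simpa using hab
        subst hq'
        exact ⟨t, q, hp, hs, Relation.ReflTransGen.refl⟩

lemma run_len {e : RE σ} {x y : List σ × List RNode}
    (h : Relation.ReflTransGen (WPStep e) x y) : x.1.length ≤ y.1.length := by
  induction h with
  | refl => exact le_refl _
  | tail hb hstep ih => cases hstep; simp at ih ⊢; omega

lemma run_nil {e : RE σ} {p1 : RPos} {y : List σ × List RNode}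
    (h : Relation.ReflTransGen (WPStep e) (([] : List σ), [some p1]) y)
    (hy : y.1 = []) : y = (([] : List σ), [some p1]) := by
  rcases Relation.ReflTransGen.cases_tail h with rfl | ⟨b, hb, hstep⟩
  · rfl
  · cases hstep; simp at hy

lemma wp_aux {σ : Type} (e : RE σ) (p1 : RPos) :
    ∀ (y : List σ × List RNode),
      Relation.ReflTransGen (RE.WPStep e) (([] : List σ), [some p1]) y →
      y.1 ≠ [] → ∀ q, (q ∈ y.2 ↔ ∃ (w0 : List σ) (a : σ) (t : List RNode) (h : RNode),
        y.1 = w0 ++ [a] ∧ RE.IsPath e t (some p1) w0 h ∧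
        RE.PWStep e (h, [a]) (q, ([] : List σ))) := by
  intro y hrun
  induction hrun with
  | refl => intro hy; exact absurd rfl hy
  | @tail b c hb hstep ih =>
      intro _ q
      cases hstep with
      | @mk w' P' a r hd hne =>
        rw [D_mem hd q]
        by_cases hw' : w' = []
        · subst hw'
          have hb' := run_nil hb rfl
          obtain rfl : P' = [some p1] := by
            have := congrArg Prod.snd hb'; simpa using this
          constructor
          · rintro ⟨h2, hh2, h', hr, hs', hq⟩
            obtain rfl : h2 = some p1 := by simpa using hh2
            obtain ⟨t, ht⟩ := path_eps_bwd hr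
            exact ⟨[], a, t, h', by simp, ht, hq ▸ consume_of hs'⟩
          · rintro ⟨w0, a', t, h, hwa, hpath, hcons⟩
            obtain ⟨rfl, rfl⟩ : w0 = [] ∧ a' = a := by
              cases w0 with
              | nil => simpa using hwa.symm
              | cons c w0' => have := congrArg List.length hwa; simp at this
            obtain ⟨hs, hq⟩ := consume_inv hcons
            exact ⟨some p1, by simp, h, path_eps_fwd hpath rfl, hs, hq⟩
        · constructor
          · rintro ⟨h2, hh2, h', hr, hs', hq⟩
            obtain ⟨w0, a0, t, h, hwa, hpath, hcons⟩ := ((ih hw' h2).mp hh2)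
            have hpath2 : IsPath e (t ++ [h2]) (some p1) (w0 ++ [a0]) h2 :=
              IsPath.snoc (w1 := []) hpath hcons
            rw [← hwa] at hpath2
            obtain ⟨t2, ht2⟩ := path_snoc_eps hpath2 hr
            exact ⟨w', a, t2, h', rfl, ht2, hq ▸ consume_of hs'⟩
          · rintro ⟨w0, a', t, h, hwa, hpath, hcons⟩
            obtain ⟨rfl, hab⟩ := List.append_inj' hwa rfl
            obtain rfl : a' = a := by simpa using hab.symm
            obtain ⟨hs, hq⟩ := consume_inv hcons
            obtain ⟨u, b, rfl⟩ := (List.eq_nil_or_concat w').resolve_left hw'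
            obtain ⟨t1, h1, hp1, hs1, hrr⟩ := path_decomp hpath u b (List.concat_eq_append)
            have hmem : e.kontN h1 ∈ P' :=
              (ih hw' _).mpr ⟨u, b, t1, h1, List.concat_eq_append, hp1, consume_of hs1⟩
            exact ⟨e.kontN h1, hmem, h, hrr, hs, hq⟩

end RE

/-- wP frame invariant: assuming all starred bodies of `e` are
non-nullable, if `(ε, [p1]) →* (w, P)` by wP-frame transitions with `w` nonempty,
then `q` occurs in `P` iff there is a path `p1 ⇒[w] q` whose final transition is a
symbol-consuming transition consuming the last symbol of `w`. -/
theorem wp_invariant {σ : Type} (e : RE σ) (hnn : RE.NonNullableStars e)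
    (p1 : RPos) (hp1 : (e.sub p1).isSome)
    (w : List σ) (P : List RNode)
    (hrun : Relation.ReflTransGen (RE.WPStep e) (([] : List σ), [some p1]) (w, P))
    (hw : w ≠ []) (q : RNode) :
    q ∈ P ↔ ∃ (w0 : List σ) (a : σ) (t : List RNode) (h : RNode),
      w = w0 ++ [a] ∧ RE.IsPath e t (some p1) w0 h ∧
      RE.PWStep e (h, [a]) (q, ([] : List σ)) := by
  exact RE.wp_aux e p1 (w, P) hrun hw q
end

section
/- Termination of the HFπ machine: assume Σ is finite and that for every subexpression of e of the form f*, the body f does not match the empty string (so evolve and D are well-defined). Fix a node p0 with π(p0) a Kleene star with child p1. Then every sequence of HFπ transitions starting from the initial configuration ⟨∅; [(ε, [p1])]⟩ is finite; i.e., the HFπ machine always terminates. -/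
namespace RETermination

open RE

variable {σ : Type}

/-- Depth of a regular expression: a bound on the length of valid positions. -/
def depth : RE σ → ℕ
  | .sym _ => 0
  | .eps => 0
  | .cat f1 f2 => max (depth f1) (depth f2) + 1
  | .alt f1 f2 => max (depth f1) (depth f2) + 1
  | .star f => depth f + 1

theorem sub_length {e : RE σ} {p : RPos} {f : RE σ} (h : e.sub p = some f) :
    p.length ≤ depth e := by
  induction e generalizing p f with
  | sym a => cases p with
    | nil => simp
    | cons b q => simp [RE.sub] at h
  | eps => cases p with
    | nil => simp
    | cons b q => simp [RE.sub] at h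
  | cat f1 f2 ih1 ih2 =>
    cases p with
    | nil => simp [depth]
    | cons b q =>
      simp only [RE.sub] at h
      cases b with
      | false =>
        have := ih1 (by simpa using h)
        simp only [depth, List.length_cons]
        omega
      | true =>
        have := ih2 (by simpa using h)
        simp only [depth, List.length_cons]
        omega
  | alt f1 f2 ih1 ih2 =>
    cases p with
    | nil => simp [depth]
    | cons b q =>
      simp only [RE.sub] at h
      cases b with
      | false =>
        have := ih1 (by simpa using h)
        simp only [depth, List.length_cons]
        omega
      | true =>
        have := ih2 (by simpa using h)
        simp only [depth, List.length_cons]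
        omega
  | star f1 ih =>
    cases p with
    | nil => simp [depth]
    | cons b q =>
      cases b with
      | false =>
        simp only [RE.sub] at h
        have := ih h
        simp only [depth, List.length_cons]
        omega
      | true => simp [RE.sub] at h

theorem kontAux_length (rest : RPos) :
    ∀ (f : RE σ) (cur : RPos) (kc : RNode),
    (∀ q, kc = some q → q.length ≤ cur.length) →
    ∀ q, RE.kontAux f cur rest kc = some q → q.length ≤ cur.length + rest.length := by
  induction rest with
  | nil =>
    intro f cur kc hkc q hq
    cases f <;> simp only [RE.kontAux] at hq <;> simpa using hkc q hq
  | cons b rest ih =>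
    intro f cur kc hkc q hq
    cases f with
    | sym a => simp [RE.kontAux] at hq
    | eps => simp [RE.kontAux] at hq
    | cat f1 f2 =>
      cases b with
      | false =>
        have := ih f1 (cur ++ [false]) (some (cur ++ [true]))
          (by rintro r hr; cases hr; simp) q (by simpa [RE.kontAux] using hq)
        simp only [List.length_append, List.length_cons, List.length_nil] at this ⊢
        omega
      | true =>
        have := ih f2 (cur ++ [true]) kc
          (by intro r hr; have := hkc r hr; simp; omega) q
          (by simpa [RE.kontAux] using hq)
        simp only [List.length_append, List.length_cons, List.length_nil] at this ⊢
        omega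
    | alt f1 f2 =>
      cases b with
      | false =>
        have := ih f1 (cur ++ [false]) kc
          (by intro r hr; have := hkc r hr; simp; omega) q
          (by simpa [RE.kontAux] using hq)
        simp only [List.length_append, List.length_cons, List.length_nil] at this ⊢
        omega
      | true =>
        have := ih f2 (cur ++ [true]) kc
          (by intro r hr; have := hkc r hr; simp; omega) q
          (by simpa [RE.kontAux] using hq)
        simp only [List.length_append, List.length_cons, List.length_nil] at this ⊢
        omega
    | star f1 =>
      cases b with
      | false =>
        have := ih f1 (cur ++ [false]) (some cur)
          (by rintro r hr; cases hr; simp) q (by simpa [RE.kontAux] using hq)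
        simp only [List.length_append, List.length_cons, List.length_nil] at this ⊢
        omega
      | true => simp [RE.kontAux] at hq

theorem kont_length {e : RE σ} {p q : RPos} (h : e.kont p = some q) :
    q.length ≤ p.length := by
  simpa using kontAux_length p e [] none (by simp) q h

/-- The set of node pointers of bounded length; all pointers appearing in
derivative results lie in this set. -/
def Valid (e : RE σ) : Set RNode := {x | ∀ q, x = some q → q.length ≤ depth e}

theorem valid_finite (e : RE σ) : (Valid e).Finite := by
  have h1 : Valid e ⊆ insert none (Option.some '' {l : List Bool | l.length ≤ depth e}) := by
    intro x hx
    cases x with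
    | none => simp
    | some q =>
      right
      exact ⟨q, hx q rfl, rfl⟩
  exact (Set.Finite.insert none (Set.Finite.image Option.some (List.finite_length_le Bool (RETermination.depth e)))).subset h1

theorem DRel_valid {e : RE σ} {a : σ} {P r : List RNode} (h : RE.DRel e a P r) :
    ∀ x ∈ r, x ∈ Valid e := by
  induction h with
  | nil => simp
  | symNe _ _ _ ih => exact ih
  | @symEq h t r hs _ ih =>
    intro x hx
    rcases List.mem_cons.1 hx with rfl | hx
    · cases h with
      | none => simp [RE.subN] at hs
      | some p =>
        simp only [RE.subN] at hs
        intro q hq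
        simp only [RE.kontN] at hq
        exact le_trans (kont_length hq) (sub_length hs)
    · exact ih x hx
  | ev _ _ _ ih => exact ih

/-- Key step lemma: each HF step preserves the invariant (all history sets are
in the powerset `T` of valid pointers) and strictly decreases the measure. -/
theorem step_measure [Fintype σ] {e : RE σ} (T : Finset (Finset RNode))
    (hT : ∀ (a : σ) (P r : List RNode), RE.DRel e a P r → r.toFinset ∈ T)
    {c c' : HFConf σ} (h : RE.HFStep e c c') (hc : ∀ s ∈ c.1, s ∈ T) :
    (∀ s ∈ c'.1, s ∈ T) ∧
      (T \ c'.1).card * (Fintype.card σ + 1) + c'.2.length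
        < (T \ c.1).card * (Fintype.card σ + 1) + c.2.length := by
  cases h with
  | @mk H w P f l hnd hmem hcomp =>
    constructor
    · intro s hs
      rcases Finset.mem_union.1 hs with hs | hs
      · exact hc s hs
      · simp only [List.mem_toFinset, List.mem_map] at hs
        obtain ⟨x, hxl, rfl⟩ := hs
        exact hT x.1 P x.2 (hmem x hxl).1
    · cases l with
      | nil =>
        simp
      | cons x l' =>
        set C := Fintype.card σ with hC
        set S := ((x :: l').map (fun x => x.2.toFinset)).toFinset with hS
        have hx1 : x.2.toFinset ∈ T := hT x.1 P x.2 (hmem x (by simp)).1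
        have hx2 : x.2.toFinset ∉ H := (hmem x (by simp)).2.2
        have hx3 : x.2.toFinset ∈ H ∪ S := by
          apply Finset.mem_union_right
          simp [hS]
        have hsub : T \ (H ∪ S) ⊆ T \ H :=
          Finset.sdiff_subset_sdiff (le_refl T) Finset.subset_union_left
        have hcard : (T \ (H ∪ S)).card < (T \ H).card := by
          apply Finset.card_lt_card
          rw [Finset.ssubset_iff_of_subset hsub]
          exact ⟨x.2.toFinset, Finset.mem_sdiff.2 ⟨hx1, hx2⟩,
            fun hcon => (Finset.mem_sdiff.1 hcon).2 hx3⟩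
        have hlen : (x :: l').length ≤ C := by
          have h1 : ((x :: l').map Prod.fst).length ≤ C :=
            hnd.length_le_card
          simpa using h1
        simp only [List.length_cons] at hlen
        have hm : (T \ (H ∪ S)).card * (C + 1) + (C + 1) ≤ (T \ H).card * (C + 1) := by
          have := Nat.mul_le_mul_right (C + 1) (Nat.succ_le_of_lt hcard)
          calc (T \ (H ∪ S)).card * (C + 1) + (C + 1)
              = ((T \ (H ∪ S)).card + 1) * (C + 1) := by ring
            _ ≤ (T \ H).card * (C + 1) := this
        simp only [List.length_append, List.length_map, List.length_cons]
        linarith [hlen, hm]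

end RETermination
/-- termination of the HFπ machine: if `Σ` is finite and all
starred bodies of `e` are non-nullable, then there is no infinite sequence of HFπ
transitions from the initial configuration `⟨∅; [(ε, [p1])]⟩`. -/
theorem hf_terminates {σ : Type} [Fintype σ] (e : RE σ) (hnn : RE.NonNullableStars e)
    (p0 : RPos) (f1 : RE σ) (hstar : e.sub p0 = some (RE.star f1)) :
    ¬ ∃ g : ℕ → HFConf σ,
      g 0 = ((∅ : Finset (Finset RNode)), [(([] : List σ), [some (p0 ++ [false])])]) ∧
      ∀ n, RE.HFStep e (g n) (g (n + 1)) := by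
  classical
  rintro ⟨g, hg0, hgs⟩
  set T : Finset (Finset RNode) := (RETermination.valid_finite e).toFinset.powerset with hTdef
  have hT : ∀ (a : σ) (P r : List RNode), RE.DRel e a P r → r.toFinset ∈ T := by
    intro a P r hr
    rw [hTdef, Finset.mem_powerset]
    intro x hx
    rw [Set.Finite.mem_toFinset]
    exact RETermination.DRel_valid hr x (List.mem_toFinset.1 hx)
  have hinv : ∀ n, ∀ s ∈ (g n).1, s ∈ T := by
    intro n
    induction n with
    | zero => rw [hg0]; simp
    | succ n ih => exact (RETermination.step_measure T hT (hgs n) ih).1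
  set μ : ℕ → ℕ :=
    fun n => (T \ (g n).1).card * (Fintype.card σ + 1) + (g n).2.length with hμ
  have hdec : ∀ n, μ (n + 1) < μ n := fun n =>
    (RETermination.step_measure T hT (hgs n) (hinv n)).2
  have hle : ∀ n, μ n + n ≤ μ 0 := by
    intro n
    induction n with
    | zero => simp
    | succ n ih => have := hdec n; omega
  have := hle (μ 0 + 1)
  omega
end

section
/- Cost of exhaustive backtracking search: let p be a node (or ⊥) and w a string such that no PWπ run from ⟨p; w⟩ reaches a configuration ⟨⊥; u⟩ for any string u. Call a PWπ run from ⟨p; w⟩ maximal if it ends in a configuration with no PWπ successor. If there exist N pairwise distinct maximal PWπ runs from ⟨p; w⟩, then every finite sequence of PWFπ transitions from the configuration [⟨p; w⟩] to the empty list has length at least N. -/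
namespace RE

/-- `GoodRun e f (i, l)` : `l` is a maximal PWπ run whose head is the `i`-th entry
of the stack `f`. -/
def GoodRun {σ : Type} (e : RE σ) (f : List (RConf σ)) (x : ℕ × List (RConf σ)) : Prop :=
  ∃ h t, x.2 = h :: t ∧ f[x.1]? = some h ∧ x.2.Chain' (PWStep e) ∧
    ∀ c d, x.2.getLast? = some c → ¬ PWStep e c d

theorem goodRun_card {σ : Type} [DecidableEq σ] (e : RE σ) : ∀ (m : ℕ) (f : List (RConf σ)),
    NSteps (PWFStep e) m f [] →
    ∀ S : Finset (ℕ × List (RConf σ)), (∀ x ∈ S, GoodRun e f x) → S.card ≤ m := by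
  intro m
  induction m with
  | zero =>
    intro f hf S hS
    cases hf
    suffices h : S = ∅ by simp [h]
    apply Finset.eq_empty_of_forall_notMem
    intro x hx
    obtain ⟨h, t, _, hget, _⟩ := hS x hx
    simp at hget
  | succ m ih =>
    intro f hf S hS
    obtain ⟨g, hstep, hrest⟩ := hf
    cases hstep with
    | @one c c' rest hcc' huniq =>
      have key : ∀ x ∈ S, x.1 = 0 → ∃ t', x.2 = c :: c' :: t' := by
        intro x hx h0
        obtain ⟨h, t, hx2, hget, hch, hlast⟩ := hS x hx
        rw [h0] at hget
        simp only [List.getElem?_cons_zero] at hget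
        have hhc : h = c := by injection hget with h'; exact h'.symm
        rw [hhc] at hx2
        cases t with
        | nil =>
          exfalso
          exact hlast c c' (by rw [hx2]; rfl) hcc'
        | cons h' t' =>
          rw [hx2] at hch
          have hstep' : PWStep e c h' := (List.isChain_cons_cons.mp hch).1
          exact ⟨t', by rw [hx2, huniq h' hstep']⟩
      set φ : ℕ × List (RConf σ) → ℕ × List (RConf σ) :=
        fun x => if x.1 = 0 then (0, x.2.tail) else x with hφ
      have hinj : Set.InjOn φ S := by
        intro x hx y hy hxy
        by_cases hx0 : x.1 = 0 <;> by_cases hy0 : y.1 = 0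
        · obtain ⟨tx, hx2⟩ := key x hx hx0
          obtain ⟨ty, hy2⟩ := key y hy hy0
          have htl : x.2.tail = y.2.tail := by
            have h1 : (φ x).2 = x.2.tail := by simp [hφ, hx0]
            have h2 : (φ y).2 = y.2.tail := by simp [hφ, hy0]
            rw [← h1, ← h2, hxy]
          rw [hx2, hy2] at htl
          simp at htl
          exact Prod.ext (hx0.trans hy0.symm) (by rw [hx2, hy2, htl])
        · exfalso
          have h1 : (φ x).1 = 0 := by simp [hφ, hx0]
          have h2 : (φ y).1 = y.1 := by simp [hφ, hy0]
          rw [hxy, h2] at h1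
          exact hy0 h1
        · exfalso
          have h1 : (φ y).1 = 0 := by simp [hφ, hy0]
          have h2 : (φ x).1 = x.1 := by simp [hφ, hx0]
          rw [← hxy, h2] at h1
          exact hx0 h1
        · have h1 : (φ x) = x := by simp [hφ, hx0]
          have h2 : (φ y) = y := by simp [hφ, hy0]
          rw [← h1, ← h2, hxy]
      have hcard : S.card = (S.image φ).card := (Finset.card_image_of_injOn hinj).symm
      rw [hcard]
      refine le_trans (ih (c' :: rest) hrest (S.image φ) ?_) (Nat.le_succ m)
      intro x' hx'
      obtain ⟨x, hx, rfl⟩ := Finset.mem_image.mp hx'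
      obtain ⟨h, t, hx2, hget, hch, hlast⟩ := hS x hx
      by_cases hx0 : x.1 = 0
      · obtain ⟨t', hx2'⟩ := key x hx hx0
        have hpx : φ x = (0, c' :: t') := by simp [hφ, hx0, hx2']
        rw [hpx]
        refine ⟨c', t', rfl, rfl, ?_, ?_⟩
        · exact (List.isChain_cons_cons.mp (hx2' ▸ hch)).2
        · intro cc d hcc
          apply hlast cc d
          rw [hx2', List.getLast?_cons_cons]
          exact hcc
      · obtain ⟨j, hj⟩ : ∃ j, x.1 = j + 1 :=
          ⟨x.1 - 1, (Nat.succ_pred_eq_of_pos (Nat.pos_of_ne_zero hx0)).symm⟩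
        have hpx : φ x = x := by simp [hφ, hx0]
        rw [hpx]
        refine ⟨h, t, hx2, ?_, hch, hlast⟩
        rw [hj]
        rw [hj] at hget
        simpa using hget
    | @two c c1 c2 rest hc1 hc2 hne huniq =>
      have key : ∀ x ∈ S, x.1 = 0 → ∃ h' t', x.2 = c :: h' :: t' ∧ (h' = c1 ∨ h' = c2) := by
        intro x hx h0
        obtain ⟨h, t, hx2, hget, hch, hlast⟩ := hS x hx
        rw [h0] at hget
        simp only [List.getElem?_cons_zero] at hget
        have hhc : h = c := by injection hget with h'; exact h'.symm
        rw [hhc] at hx2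
        cases t with
        | nil =>
          exfalso
          exact hlast c c1 (by rw [hx2]; rfl) hc1
        | cons h' t' =>
          rw [hx2] at hch
          have hstep' : PWStep e c h' := (List.isChain_cons_cons.mp hch).1
          exact ⟨h', t', hx2, huniq h' hstep'⟩
      set φ : ℕ × List (RConf σ) → ℕ × List (RConf σ) :=
        fun x => if x.1 = 0 then
          (if x.2.tail.head? = some c1 then (0, x.2.tail) else (1, x.2.tail))
          else (x.1 + 1, x.2) with hφ
      have hφ1 : ∀ x, x.1 = 0 → ((φ x).1 = 0 ∨ (φ x).1 = 1) ∧ (φ x).2 = x.2.tail := by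
        intro x h0
        simp only [hφ, h0, ite_true]
        split
        · exact ⟨Or.inl rfl, rfl⟩
        · exact ⟨Or.inr rfl, rfl⟩
      have hφ2 : ∀ x : ℕ × List (RConf σ), ¬ x.1 = 0 → φ x = (x.1 + 1, x.2) := by
        intro x h0
        simp [hφ, h0]
      have hinj : Set.InjOn φ S := by
        intro x hx y hy hxy
        by_cases hx0 : x.1 = 0 <;> by_cases hy0 : y.1 = 0
        · obtain ⟨hx', tx, hx2, _⟩ := key x hx hx0
          obtain ⟨hy', ty, hy2, _⟩ := key y hy hy0
          have htl : x.2.tail = y.2.tail := by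
            rw [← (hφ1 x hx0).2, ← (hφ1 y hy0).2, hxy]
          rw [hx2, hy2] at htl
          simp at htl
          exact Prod.ext (hx0.trans hy0.symm) (by rw [hx2, hy2, htl.1, htl.2])
        · exfalso
          have h1 := (hφ1 x hx0).1
          have h2 : (φ y).1 = y.1 + 1 := by rw [hφ2 y hy0]
          rw [hxy, h2] at h1
          rcases h1 with h1 | h1 <;> omega
        · exfalso
          have h1 := (hφ1 y hy0).1
          have h2 : (φ x).1 = x.1 + 1 := by rw [hφ2 x hx0]
          rw [← hxy, h2] at h1
          rcases h1 with h1 | h1 <;> omega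
        · rw [hφ2 x hx0, hφ2 y hy0] at hxy
          have h1 := congrArg Prod.fst hxy
          have h2 := congrArg Prod.snd hxy
          simp only at h1 h2
          exact Prod.ext (by omega) h2
      have hcard : S.card = (S.image φ).card := (Finset.card_image_of_injOn hinj).symm
      rw [hcard]
      refine le_trans (ih (c1 :: c2 :: rest) hrest (S.image φ) ?_) (Nat.le_succ m)
      intro x' hx'
      obtain ⟨x, hx, rfl⟩ := Finset.mem_image.mp hx'
      obtain ⟨h, t, hx2, hget, hch, hlast⟩ := hS x hx
      by_cases hx0 : x.1 = 0
      · obtain ⟨h', t', hx2', hor⟩ := key x hx hx0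
        have hch' : (h' :: t').Chain' (PWStep e) := (List.isChain_cons_cons.mp (hx2' ▸ hch)).2
        have hlast' : ∀ cc d, (h' :: t').getLast? = some cc → ¬ PWStep e cc d := by
          intro cc d hcc
          apply hlast cc d
          rw [hx2', List.getLast?_cons_cons]
          exact hcc
        have htail : x.2.tail = h' :: t' := by rw [hx2']; rfl
        rcases hor with rfl | rfl
        · have hpx : φ x = (0, h' :: t') := by
            simp only [hφ, hx0, ite_true, htail]
            simp
          rw [hpx]
          exact ⟨h', t', rfl, rfl, hch', hlast'⟩
        · have hcond : ¬ ((h' :: t').head? = some c1) := by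
            simp only [List.head?_cons, Option.some.injEq]
            exact fun hcon => hne hcon.symm
          have hpx : φ x = (1, h' :: t') := by
            simp only [hφ, hx0, ite_true, htail]
            rw [if_neg hcond]
          rw [hpx]
          exact ⟨h', t', rfl, rfl, hch', hlast'⟩
      · obtain ⟨j, hj⟩ : ∃ j, x.1 = j + 1 :=
          ⟨x.1 - 1, (Nat.succ_pred_eq_of_pos (Nat.pos_of_ne_zero hx0)).symm⟩
        rw [hφ2 x hx0]
        refine ⟨h, t, hx2, ?_, hch, hlast⟩
        rw [hj] at hget
        simp only [hj]
        simpa using hget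
    | @fail c rest hdead =>
      classical
      have hsplit := Finset.card_filter_add_card_filter_not
        (s := S) (p := fun x => x.1 = 0)
      set S0 := S.filter (fun x => x.1 = 0) with hS0
      set S1 := S.filter (fun x => ¬ x.1 = 0) with hS1
      have hS0card : S0.card ≤ 1 := by
        apply Finset.card_le_one.mpr
        intro x hx y hy
        have hval : ∀ z ∈ S0, z = (0, [c]) := by
          intro z hz
          obtain ⟨hz', hz0⟩ := Finset.mem_filter.mp hz
          obtain ⟨h, t, hz2, hget, hch, hlast⟩ := hS z hz'
          rw [hz0] at hget
          simp only [List.getElem?_cons_zero] at hget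
          have hhc : h = c := by injection hget with h'; exact h'.symm
          rw [hhc] at hz2
          cases t with
          | nil => exact Prod.ext hz0 hz2
          | cons h' t' =>
            exfalso
            rw [hz2] at hch
            exact hdead h' (List.isChain_cons_cons.mp hch).1
        rw [hval x hx, hval y hy]
      set φ : ℕ × List (RConf σ) → ℕ × List (RConf σ) := fun x => (x.1 - 1, x.2) with hφ
      have hinj : Set.InjOn φ S1 := by
        intro x hx y hy hxy
        have hx0 := (Finset.mem_filter.mp hx).2
        have hy0 := (Finset.mem_filter.mp hy).2
        have hxy' : (x.1 - 1, x.2) = (y.1 - 1, y.2) := hxy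
        have h1 := congrArg Prod.fst hxy'
        have h2 := congrArg Prod.snd hxy'
        simp only at h1 h2 hx0 hy0
        exact Prod.ext (by omega) h2
      have hS1card : S1.card ≤ m := by
        rw [← Finset.card_image_of_injOn hinj]
        apply ih g hrest
        intro x' hx'
        obtain ⟨x, hx, rfl⟩ := Finset.mem_image.mp hx'
        have hx0 := (Finset.mem_filter.mp hx).2
        have hx0 : ¬ x.1 = 0 := hx0
        obtain ⟨h, t, hx2, hget, hch, hlast⟩ := hS x (Finset.mem_filter.mp hx).1
        obtain ⟨j, hj⟩ : ∃ j, x.1 = j + 1 :=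
          ⟨x.1 - 1, (Nat.succ_pred_eq_of_pos (Nat.pos_of_ne_zero hx0)).symm⟩
        refine ⟨h, t, hx2, ?_, hch, hlast⟩
        show g[x.1 - 1]? = some h
        rw [hj] at hget
        rw [hj]
        simpa using hget
      omega

end RE

/-- cost of exhaustive backtracking: if no PWπ run from `⟨p; w⟩`
reaches `⟨⊥; u⟩`, and there are `N` pairwise distinct maximal PWπ runs from `⟨p; w⟩`
(runs ending in a configuration with no successor), then every sequence of PWFπ
transitions from `[⟨p; w⟩]` to the empty list has length at least `N`. -/
theorem backtracking_cost {σ : Type} [DecidableEq σ] (e : RE σ) (p : RNode)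
    (w : List σ)
    (hfail : ¬ ∃ u : List σ, Relation.ReflTransGen (RE.PWStep e) (p, w) (none, u))
    (N : ℕ) (T : Finset (List (RConf σ))) (hcard : N ≤ T.card)
    (hT : ∀ l ∈ T, l.head? = some (p, w) ∧ l.Chain' (RE.PWStep e) ∧
      ∀ (c d : RConf σ), l.getLast? = some c → ¬ RE.PWStep e c d)
    (m : ℕ) (hrun : NSteps (RE.PWFStep e) m [(p, w)] []) :
    N ≤ m := by
  have hinj : Set.InjOn (fun l => ((0 : ℕ), l)) (T : Set (List (RConf σ))) := by
    intro x _ y _ hxy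
    exact congrArg Prod.snd hxy
  have hTcard : T.card = (T.image (fun l => ((0 : ℕ), l))).card :=
    (Finset.card_image_of_injOn hinj).symm
  refine le_trans hcard ?_
  rw [hTcard]
  apply RE.goodRun_card e m [(p, w)] hrun
  intro x hx
  obtain ⟨l, hl, rfl⟩ := Finset.mem_image.mp hx
  obtain ⟨hhead, hch, hlast⟩ := hT l hl
  cases l with
  | nil => simp at hhead
  | cons h t =>
    simp only [List.head?] at hhead
    obtain rfl : h = (p, w) := by injection hhead
    exact ⟨(p, w), t, rfl, rfl, hch, hlast⟩
end
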